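/- arXiv:2107.09620 — 3 statements merged into one kernel-verified Lean document; each statement's English description precedes it below -/
import Mathlib

section
/- Let n ≥ 1 and m ≥ 1 be integers. For every integer N ≥ 0 there exists C > 0 (depending only on n, m, N) such that for every ε > 0, every unit vector ω ∈ ℝⁿ, and every ξ ∈ ℝⁿ, the N-th total derivative of ξ ↦ p_ω(ξ)(e^{−ε p_ω(ξ)} − 1) satisfies ‖D^N [p_ω (e^{−ε p_ω} − 1)](ξ)‖ ≤ C ε ⟨ξ⟩^{−(4m−4+N)}. -/
set_option linter.unusedSectionVars false
set_option linter.unusedVariables false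

open Real Finset

noncomputable section Aux11

variable {E : Type*} [NormedAddCommGroup E] [InnerProductSpace ℝ E]

/-- Japanese bracket. -/
def G11 (x : E) : ℝ := Real.sqrt (1 + ‖x‖ ^ 2)

lemma one_le_G11 (x : E) : 1 ≤ G11 x := by
  rw [show (1:ℝ) = Real.sqrt 1 by simp [Real.sqrt_one]]
  exact Real.sqrt_le_sqrt (by nlinarith [sq_nonneg ‖x‖])

lemma G11_pos (x : E) : 0 < G11 x := lt_of_lt_of_le one_pos (one_le_G11 x)

lemma norm_le_G11 (x : E) : ‖x‖ ≤ G11 x := by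
  have : ‖x‖ = Real.sqrt (‖x‖ ^ 2) := by rw [Real.sqrt_sq (norm_nonneg x)]
  rw [this]
  exact Real.sqrt_le_sqrt (by nlinarith)

lemma sq_G11 (x : E) : G11 x ^ 2 = 1 + ‖x‖ ^ 2 := Real.sq_sqrt (by positivity)

lemma G11_pow_le (x : E) {a b : ℕ} (h : a ≤ b) : G11 x ^ a ≤ G11 x ^ b :=
  pow_le_pow_right₀ (one_le_G11 x) h

/-- Symbol-type bound of order `r - s` for derivatives up to order `N`. -/
def Bnd (N : ℕ) (f : E → ℝ) (A : ℝ) (r s : ℕ) : Prop :=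
  ∀ j, j ≤ N → ∀ x : E, ‖iteratedFDeriv ℝ j f x‖ ≤ A * G11 x ^ r / G11 x ^ (s + j)

lemma sum_choose_le (j : ℕ) (u v : ℕ → ℝ) (c : ℝ) (hc : 0 ≤ c)
    (h : ∀ i, i ≤ j → u i * v (j - i) ≤ c) (hu : ∀ i, 0 ≤ u i) :
    ∑ i ∈ Finset.range (j + 1), (j.choose i : ℝ) * u i * v (j - i) ≤ 2 ^ j * c := by
  calc ∑ i ∈ Finset.range (j + 1), (j.choose i : ℝ) * u i * v (j - i)
      ≤ ∑ i ∈ Finset.range (j + 1), (j.choose i : ℝ) * c := by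
        refine Finset.sum_le_sum fun i hi => ?_
        rw [mul_assoc]
        exact mul_le_mul_of_nonneg_left (h i (by simpa [Nat.lt_succ_iff] using hi))
          (Nat.cast_nonneg _)
    _ = 2 ^ j * c := by
        rw [← Finset.sum_mul]
        norm_cast
        rw [Nat.sum_range_choose]
-- continuing: product and sum lemmas
section B
variable {E : Type*} [NormedAddCommGroup E] [InnerProductSpace ℝ E]

lemma G11_div_mul (x : E) (A B : ℝ) {r r' a b : ℕ} :
    A * G11 x ^ r / G11 x ^ a * (B * G11 x ^ r' / G11 x ^ b)
      = A * B * G11 x ^ (r + r') / G11 x ^ (a + b) := by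
  have h := (G11_pos x).ne'
  rw [pow_add, pow_add]
  field_simp

lemma Bnd.mul {N : ℕ} {f g : E → ℝ} {A B : ℝ} {r s r' s' : ℕ}
    (hA : 0 ≤ A) (hB : 0 ≤ B)
    (hf : ContDiff ℝ (⊤ : ℕ∞) f) (hg : ContDiff ℝ (⊤ : ℕ∞) g)
    (h1 : Bnd N f A r s) (h2 : Bnd N g B r' s') :
    Bnd N (fun x => f x * g x) (2 ^ N * A * B) (r + r') (s + s') := by
  intro j hj x
  have key := norm_iteratedFDeriv_mul_le (𝕜 := ℝ) hf hg x
    (show (j : WithTop ℕ∞) ≤ ((⊤:ℕ∞) : WithTop ℕ∞) from mod_cast le_top)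
  refine key.trans ?_
  have hsum : ∑ i ∈ Finset.range (j + 1),
      (j.choose i : ℝ) * ‖iteratedFDeriv ℝ i f x‖ * ‖iteratedFDeriv ℝ (j - i) g x‖
      ≤ 2 ^ j * (A * B * G11 x ^ (r + r') / G11 x ^ (s + s' + j)) := by
    refine sum_choose_le j (fun i => ‖iteratedFDeriv ℝ i f x‖)
      (fun i => ‖iteratedFDeriv ℝ i g x‖) _
      (div_nonneg (mul_nonneg (mul_nonneg hA hB) (pow_nonneg (G11_pos x).le _))
        (pow_nonneg (G11_pos x).le _)) (fun i hi => ?_) (fun i => norm_nonneg _)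
    have e1 := h1 i (le_trans hi hj) x
    have e2 := h2 (j - i) (le_trans (Nat.sub_le _ _) hj) x
    calc ‖iteratedFDeriv ℝ i f x‖ * ‖iteratedFDeriv ℝ (j - i) g x‖
        ≤ A * G11 x ^ r / G11 x ^ (s + i) * (B * G11 x ^ r' / G11 x ^ (s' + (j - i))) :=
          mul_le_mul e1 e2 (norm_nonneg _)
            (div_nonneg (mul_nonneg hA (pow_nonneg (G11_pos x).le _)) (pow_nonneg (G11_pos x).le _))
      _ = A * B * G11 x ^ (r + r') / G11 x ^ (s + i + (s' + (j - i))) := G11_div_mul x A B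
      _ = A * B * G11 x ^ (r + r') / G11 x ^ (s + s' + j) := by
          congr 2
          omega
  refine hsum.trans ?_
  rw [show (2:ℝ) ^ N * A * B * G11 x ^ (r + r') / G11 x ^ (s + s' + j)
    = 2 ^ N * (A * B * G11 x ^ (r + r') / G11 x ^ (s + s' + j)) by ring]
  exact mul_le_mul_of_nonneg_right (pow_le_pow_right₀ one_le_two hj)
    (div_nonneg (mul_nonneg (mul_nonneg hA hB) (pow_nonneg (G11_pos x).le _)) (pow_nonneg (G11_pos x).le _))

lemma Bnd.sum {N : ℕ} {ι : Type*} (t : Finset ι) (f : ι → E → ℝ) (A : ι → ℝ) {r s : ℕ}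
    (hsm : ∀ i ∈ t, ContDiff ℝ (⊤ : ℕ∞) (f i)) (h : ∀ i ∈ t, Bnd N (f i) (A i) r s) :
    Bnd N (fun x => ∑ i ∈ t, f i x) (∑ i ∈ t, A i) r s := by
  intro j hj x
  rw [show (fun x => ∑ i ∈ t, f i x) = (∑ i ∈ t, f i ·) by rfl]
  rw [iteratedFDeriv_sum (fun i hi => (hsm i hi).of_le (mod_cast le_top))]
  rw [Finset.sum_apply]
  calc ‖∑ i ∈ t, iteratedFDeriv ℝ j (f i) x‖ ≤ ∑ i ∈ t, ‖iteratedFDeriv ℝ j (f i) x‖ :=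
        norm_sum_le _ _
    _ ≤ ∑ i ∈ t, A i * G11 x ^ r / G11 x ^ (s + j) :=
        Finset.sum_le_sum fun i hi => h i hi j hj x
    _ = (∑ i ∈ t, A i) * G11 x ^ r / G11 x ^ (s + j) := by
        rw [← Finset.sum_div, ← Finset.sum_mul]

end B
section C
variable {E : Type*} [NormedAddCommGroup E] [InnerProductSpace ℝ E]

lemma norm_itfd_sub_const (c : E) (hc : ‖c‖ ≤ 1) (j : ℕ) (x : E) :
    ‖iteratedFDeriv ℝ j (fun y : E => y - c) x‖ ≤ 2 * G11 x / G11 x ^ j := by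
  have hG1 := one_le_G11 x
  have hG0 := G11_pos x
  match j with
  | 0 =>
    rw [norm_iteratedFDeriv_zero]
    have : ‖x - c‖ ≤ 2 * G11 x := by
      calc ‖x - c‖ ≤ ‖x‖ + ‖c‖ := norm_sub_le _ _
        _ ≤ G11 x + G11 x := add_le_add (norm_le_G11 x) (hc.trans hG1)
        _ = 2 * G11 x := by ring
    simpa using this
  | 1 =>
    rw [show iteratedFDeriv ℝ 1 (fun y : E => y - c) x = iteratedFDeriv ℝ (0 + 1) (fun y : E => y - c) x from rfl, ← norm_iteratedFDeriv_fderiv, norm_iteratedFDeriv_zero]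
    have hfd : fderiv ℝ (fun y : E => y - c) x = ContinuousLinearMap.id ℝ E := by
      rw [fderiv_sub_const]; exact fderiv_id
    rw [hfd, pow_one]
    calc ‖ContinuousLinearMap.id ℝ E‖ ≤ 1 := ContinuousLinearMap.norm_id_le
      _ ≤ 2 * G11 x / G11 x := by rw [mul_div_assoc, div_self hG0.ne']; linarith
  | (j + 2) =>
    have hfd : fderiv ℝ (fun y : E => y - c) = fun _ : E => ContinuousLinearMap.id ℝ E := by
      funext y
      rw [fderiv_sub_const]; exact fderiv_id
    rw [show j + 2 = (j + 1) + 1 by rfl, ← norm_iteratedFDeriv_fderiv, hfd,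
      iteratedFDeriv_const_of_ne (Nat.succ_ne_zero j)]
    simp only [Pi.zero_apply, norm_zero]
    positivity

lemma bnd_normsq (N : ℕ) (c : E) (hc : ‖c‖ ≤ 1) :
    Bnd N (fun y : E => ‖y - c‖ ^ 2) (2 ^ (N + 2)) 2 0 := by
  intro j hj x
  have hG0 := G11_pos x
  have heq : (fun y : E => ‖y - c‖ ^ 2)
      = fun y : E => (innerSL ℝ (E := E)) (y - c) (y - c) := by
    funext y
    rw [innerSL_apply_apply, real_inner_self_eq_norm_sq]
  rw [heq]
  have hsm : ContDiff ℝ ((⊤:ℕ∞) : WithTop ℕ∞) (fun y : E => y - c) :=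
    contDiff_id.sub contDiff_const
  have key := (innerSL ℝ (E := E)).norm_iteratedFDeriv_le_of_bilinear_of_le_one
    hsm hsm x (show (j : WithTop ℕ∞) ≤ ((⊤:ℕ∞) : WithTop ℕ∞) from mod_cast le_top)
    (norm_innerSL_le ℝ)
  refine key.trans ?_
  have hsum : ∑ i ∈ Finset.range (j + 1), (j.choose i : ℝ)
        * ‖iteratedFDeriv ℝ i (fun y : E => y - c) x‖
        * ‖iteratedFDeriv ℝ (j - i) (fun y : E => y - c) x‖
      ≤ 2 ^ j * (4 * G11 x ^ 2 / G11 x ^ (0 + j)) := by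
    refine sum_choose_le j (fun i => ‖iteratedFDeriv ℝ i (fun y : E => y - c) x‖)
      (fun i => ‖iteratedFDeriv ℝ i (fun y : E => y - c) x‖) _
      (div_nonneg (by positivity) (pow_nonneg hG0.le _)) (fun i hi => ?_)
      (fun i => norm_nonneg _)
    calc ‖iteratedFDeriv ℝ i (fun y : E => y - c) x‖
          * ‖iteratedFDeriv ℝ (j - i) (fun y : E => y - c) x‖
        ≤ (2 * G11 x / G11 x ^ i) * (2 * G11 x / G11 x ^ (j - i)) :=
          mul_le_mul (norm_itfd_sub_const c hc i x) (norm_itfd_sub_const c hc (j - i) x)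
            (norm_nonneg _) (div_nonneg (by positivity) (pow_nonneg hG0.le _))
      _ = 4 * G11 x ^ 2 / G11 x ^ (0 + j) := by
          rw [div_mul_div_comm, show G11 x ^ i * G11 x ^ (j - i) = G11 x ^ (0 + j) by
            rw [← pow_add]; congr 1; omega]
          ring
    
  refine hsum.trans ?_
  have : (2:ℝ) ^ j * (4 * G11 x ^ 2 / G11 x ^ (0 + j))
      ≤ 2 ^ N * (4 * G11 x ^ 2 / G11 x ^ (0 + j)) :=
    mul_le_mul_of_nonneg_right (pow_le_pow_right₀ one_le_two hj) (div_nonneg (by positivity) (pow_nonneg hG0.le _))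
  refine this.trans (le_of_eq ?_)
  rw [show (2:ℝ) ^ (N + 2) = 2 ^ N * 4 by rw [pow_add]; norm_num]
  ring

lemma contDiff_norm_pow (c : E) (k : ℕ) :
    ContDiff ℝ ((⊤:ℕ∞) : WithTop ℕ∞) (fun y : E => ‖y - c‖ ^ (2 * k)) := by
  have : (fun y : E => ‖y - c‖ ^ (2 * k)) = fun y : E => (‖y - c‖ ^ 2) ^ k := by
    funext y
    rw [← pow_mul]
  rw [this]
  exact ((contDiff_id.sub contDiff_const).norm_sq (𝕜 := ℝ)).pow k

lemma bnd_norm_pow (N : ℕ) (k : ℕ) :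
    ∃ A : ℝ, 0 < A ∧ ∀ c : E, ‖c‖ ≤ 1 → Bnd N (fun y : E => ‖y - c‖ ^ (2 * k)) A (2 * k) 0 := by
  induction k with
  | zero =>
    refine ⟨1, one_pos, fun c hc j hj x => ?_⟩
    simp only [mul_zero, pow_zero]
    match j with
    | 0 =>
      rw [norm_iteratedFDeriv_zero]
      simp [le_div_iff₀ (pow_pos (G11_pos x) _), one_le_G11, one_le_pow₀ (one_le_G11 x)]
    | (j + 1) =>
      rw [iteratedFDeriv_const_of_ne (Nat.succ_ne_zero j)]
      simp only [Pi.zero_apply, norm_zero]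
      simp only [pow_zero, mul_one, one_mul]
      exact div_nonneg zero_le_one (pow_nonneg (G11_pos x).le _)
  | succ k ih =>
    obtain ⟨A, hA, hbnd⟩ := ih
    refine ⟨2 ^ N * 2 ^ (N + 2) * A, by positivity, fun c hc => ?_⟩
    have heq : (fun y : E => ‖y - c‖ ^ (2 * (k + 1)))
        = fun y : E => ‖y - c‖ ^ 2 * ‖y - c‖ ^ (2 * k) := by
      funext y
      rw [← pow_add]
      congr 1
      omega
    rw [heq, show 2 * (k + 1) = 2 + 2 * k by omega]
    exact Bnd.mul (by positivity) hA.le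
      (by have := contDiff_norm_pow c 1; simpa using this)
      (contDiff_norm_pow c k) (bnd_normsq N c hc) (hbnd c hc)
end C
section D
variable {E : Type*} [NormedAddCommGroup E] [InnerProductSpace ℝ E]

lemma Bnd.mono {N : ℕ} {f : E → ℝ} {A A' : ℝ} {r s : ℕ} (h : Bnd N f A r s) (hle : A ≤ A') :
    Bnd N f A' r s := fun j hj x =>
  (h j hj x).trans ((div_le_div_iff_of_pos_right (pow_pos (G11_pos x) _)).2
    (mul_le_mul_of_nonneg_right hle (pow_nonneg (G11_pos x).le _)))

lemma contDiff_qf (m : ℕ) (ω : E) :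
    ContDiff ℝ ((⊤:ℕ∞) : WithTop ℕ∞) (fun x : E => ∑ ℓ ∈ Finset.range m,
      ‖x - ω‖ ^ (2 * ℓ) * ‖x - (0:E)‖ ^ (2 * (m - 1 - ℓ))) := by
  apply ContDiff.sum
  intro ℓ _
  exact (contDiff_norm_pow ω ℓ).mul (contDiff_norm_pow (0:E) (m - 1 - ℓ))

/-- uniform-in-`ω` derivative bounds for the symbol `q`. -/
lemma bnd_q (N m : ℕ) (hm : 1 ≤ m) :
    ∃ Aq, 0 < Aq ∧ ∀ ω : E, ‖ω‖ = 1 →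
      Bnd N (fun x : E => ∑ ℓ ∈ Finset.range m,
        ‖x - ω‖ ^ (2 * ℓ) * ‖x - (0:E)‖ ^ (2 * (m - 1 - ℓ))) Aq (2 * (m - 1)) 0 := by
  choose A hA hb using fun k => bnd_norm_pow (E := E) N k
  set Am : ℝ := ∑ k ∈ Finset.range (m + 1), A k with hAm
  have hAmpos : 0 < Am :=
    Finset.sum_pos (fun k _ => hA k) ⟨0, Finset.mem_range.2 (Nat.succ_pos m)⟩
  have hAmk : ∀ k ≤ m, A k ≤ Am := fun k hk =>
    Finset.single_le_sum (f := A) (fun i _ => (hA i).le)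
      (Finset.mem_range.2 (Nat.lt_succ_of_le hk))
  refine ⟨m * (2 ^ N * Am * Am), by positivity, fun ω hω => ?_⟩
  have hterm : ∀ ℓ ∈ Finset.range m,
      Bnd N (fun x : E => ‖x - ω‖ ^ (2 * ℓ) * ‖x - (0:E)‖ ^ (2 * (m - 1 - ℓ)))
        (2 ^ N * Am * Am) (2 * (m - 1)) 0 := by
    intro ℓ hℓ
    have hℓm := Finset.mem_range.1 hℓ
    have h1 : Bnd N (fun y : E => ‖y - ω‖ ^ (2 * ℓ)) Am (2 * ℓ) 0 :=
      ((hb ℓ) ω (le_of_eq hω)).mono (hAmk ℓ (by omega))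
    have h2 : Bnd N (fun y : E => ‖y - (0:E)‖ ^ (2 * (m - 1 - ℓ))) Am (2 * (m - 1 - ℓ)) 0 :=
      ((hb (m - 1 - ℓ)) (0:E) (by simp)).mono (hAmk _ (by omega))
    have := Bnd.mul hAmpos.le hAmpos.le (contDiff_norm_pow ω ℓ)
      (contDiff_norm_pow (0:E) (m - 1 - ℓ)) h1 h2
    rw [show 2 * ℓ + 2 * (m - 1 - ℓ) = 2 * (m - 1) by omega] at this
    exact this
  have := Bnd.sum (Finset.range m)
    (fun ℓ (x : E) => ‖x - ω‖ ^ (2 * ℓ) * ‖x - (0:E)‖ ^ (2 * (m - 1 - ℓ)))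
    (fun _ => 2 ^ N * Am * Am)
    (fun ℓ _ => (contDiff_norm_pow ω ℓ).mul (contDiff_norm_pow (0:E) (m - 1 - ℓ))) hterm
  exact this.mono (le_of_eq (by simp [Finset.sum_const, nsmul_eq_mul]))

/-- lower bound for `q`. -/
lemma q_lower (m : ℕ) (hm : 1 ≤ m) (ω : E) (hω : ‖ω‖ = 1) (x : E) :
    ((8:ℝ) ^ (m - 1))⁻¹ * G11 x ^ (2 * (m - 1))
      ≤ ∑ ℓ ∈ Finset.range m, ‖x - ω‖ ^ (2 * ℓ) * ‖x - (0:E)‖ ^ (2 * (m - 1 - ℓ)) := by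
  set a := ‖x - ω‖
  set b := ‖x - (0:E)‖
  have ha : 0 ≤ a := norm_nonneg _
  have hb : 0 ≤ b := norm_nonneg _
  set M := max a b with hM
  have hterm_nonneg : ∀ ℓ ∈ Finset.range m, 0 ≤ a ^ (2 * ℓ) * b ^ (2 * (m - 1 - ℓ)) :=
    fun ℓ _ => mul_nonneg (pow_nonneg ha _) (pow_nonneg hb _)
  have hqa : a ^ (2 * (m - 1)) ≤ ∑ ℓ ∈ Finset.range m, a ^ (2 * ℓ) * b ^ (2 * (m - 1 - ℓ)) := by
    have hmem : m - 1 ∈ Finset.range m := Finset.mem_range.2 (by omega)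
    have := Finset.single_le_sum hterm_nonneg hmem
    simpa [show m - 1 - (m - 1) = 0 by omega] using this
  have hqb : b ^ (2 * (m - 1)) ≤ ∑ ℓ ∈ Finset.range m, a ^ (2 * ℓ) * b ^ (2 * (m - 1 - ℓ)) := by
    have hmem : 0 ∈ Finset.range m := Finset.mem_range.2 (by omega)
    have := Finset.single_le_sum hterm_nonneg hmem
    simpa using this
  have hqM : M ^ (2 * (m - 1)) ≤ ∑ ℓ ∈ Finset.range m, a ^ (2 * ℓ) * b ^ (2 * (m - 1 - ℓ)) := by
    rcases max_cases a b with ⟨h1, _⟩ | ⟨h1, _⟩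
    · rw [hM, h1]; exact hqa
    · rw [hM, h1]; exact hqb
  refine le_trans ?_ hqM
  rw [inv_mul_le_iff₀ (by positivity)]
  -- G11 x ^ (2*(m-1)) ≤ 8^(m-1) * M^(2*(m-1))
  have hab1 : 1 ≤ b + a := by
    have h1 : ‖(x - (0:E)) - (x - ω)‖ ≤ b + a := norm_sub_le _ _
    rwa [show (x - (0:E)) - (x - ω) = ω by abel, hω] at h1
  have hbM : b ≤ M := le_max_right a b
  have haM : a ≤ M := le_max_left a b
  have hM0 : 0 ≤ M := ha.trans haM
  have hG2 : G11 x ^ 2 ≤ 8 * M ^ 2 := by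
    have hGsq : G11 x ^ 2 = 1 + b ^ 2 := by
      rw [sq_G11]
      congr 1
      rw [show b = ‖x - (0:E)‖ from rfl, sub_zero]
    nlinarith
  calc G11 x ^ (2 * (m - 1)) = (G11 x ^ 2) ^ (m - 1) := by rw [← pow_mul]
    _ ≤ (8 * M ^ 2) ^ (m - 1) := pow_le_pow_left₀ (by positivity) hG2 _
    _ = 8 ^ (m - 1) * M ^ (2 * (m - 1)) := by rw [mul_pow, ← pow_mul]

end D
section E
variable {E : Type*} [NormedAddCommGroup E] [InnerProductSpace ℝ E]

lemma div_G_mul (x : E) (P Q : ℝ) {a b c : ℕ} (h : a + b = c) :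
    P / G11 x ^ a * (Q / G11 x ^ b) = P * Q / G11 x ^ c := by
  rw [div_mul_div_comm, ← pow_add, h]

lemma div_G_cancel (x : E) (P : ℝ) {r a b : ℕ} (h : a = r + b) :
    P * G11 x ^ r / G11 x ^ a = P / G11 x ^ b := by
  have hG := (G11_pos x).ne'
  rw [h, pow_add]
  field_simp

/-- derivative bounds for `q⁻¹`, uniform over all admissible `q`. -/
lemma bnd_inv (N r : ℕ) (Aq cq : ℝ) (hAq : 0 < Aq) (hcq : 0 < cq) :
    ∃ A, 0 < A ∧ ∀ q : E → ℝ, ContDiff ℝ ((⊤:ℕ∞) : WithTop ℕ∞) q → Bnd N q Aq r 0 →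
      (∀ x, cq * G11 x ^ r ≤ q x) →
      ∀ j, j ≤ N → ∀ x, ‖iteratedFDeriv ℝ j (fun y => (q y)⁻¹) x‖ ≤ A / G11 x ^ (r + j) := by
  suffices h : ∀ J : ℕ, ∃ A, 0 < A ∧ ∀ q : E → ℝ,
      ContDiff ℝ ((⊤:ℕ∞) : WithTop ℕ∞) q → Bnd N q Aq r 0 →
      (∀ x, cq * G11 x ^ r ≤ q x) →
      ∀ j, j ≤ J → j ≤ N → ∀ x,
        ‖iteratedFDeriv ℝ j (fun y => (q y)⁻¹) x‖ ≤ A / G11 x ^ (r + j) by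
    obtain ⟨A, hA, hh⟩ := h N
    exact ⟨A, hA, fun q h1 h2 h3 j hj => hh q h1 h2 h3 j hj hj⟩
  intro J
  induction J with
  | zero =>
    refine ⟨cq⁻¹, by positivity, fun q hsm hq hlow j hj hjN x => ?_⟩
    obtain rfl := Nat.le_zero.1 hj
    have hqpos : 0 < q x := lt_of_lt_of_le (mul_pos hcq (pow_pos (G11_pos x) _)) (hlow x)
    rw [norm_iteratedFDeriv_zero, Real.norm_eq_abs, abs_of_pos (inv_pos.2 hqpos)]
    calc (q x)⁻¹ ≤ (cq * G11 x ^ r)⁻¹ := by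
          apply inv_anti₀ (mul_pos hcq (pow_pos (G11_pos x) _)) (hlow x)
      _ = cq⁻¹ / G11 x ^ (r + 0) := by rw [Nat.add_zero, mul_inv, div_eq_mul_inv]
  | succ J IH =>
    obtain ⟨A, hA, hIH⟩ := IH
    refine ⟨A + 2 ^ (2 * N) * (A * A * Aq), by positivity, fun q hsm hq hlow j hj hjN x => ?_⟩
    have hqpos : ∀ y, 0 < q y :=
      fun y => lt_of_lt_of_le (mul_pos hcq (pow_pos (G11_pos y) _)) (hlow y)
    rcases Nat.lt_or_ge j (J + 1) with hlt | hge
    · refine (hIH q hsm hq hlow j (by omega) hjN x).trans ?_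
      refine (div_le_div_iff_of_pos_right (pow_pos (G11_pos x) _)).2 ?_
      nlinarith [pow_pos (two_pos (α := ℝ)) (2 * N), mul_pos (mul_pos hA hA) hAq]
    obtain rfl : j = J + 1 := by omega
    -- the derivative of q⁻¹
    have hdiff : Differentiable ℝ q := hsm.differentiable (by simp)
    have hder : ∀ y : E, HasFDerivAt (fun y => (q y)⁻¹)
        ((-(q y ^ 2)⁻¹) • fderiv ℝ q y) y := fun y =>
      (hasDerivAt_inv (hqpos y).ne').comp_hasFDerivAt y (hdiff y).hasFDerivAt
    have hfd : fderiv ℝ (fun y => (q y)⁻¹) = fun y => (-(q y ^ 2)⁻¹) • fderiv ℝ q y :=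
      funext fun y => (hder y).fderiv
    rw [← norm_iteratedFDeriv_fderiv, hfd]
    have hsf : ContDiff ℝ ((J : ℕ∞) : WithTop ℕ∞) (fun y : E => -(q y ^ 2)⁻¹) :=
      (((hsm.pow 2).inv (fun y => pow_ne_zero 2 (hqpos y).ne')).neg).of_le
        (by exact_mod_cast le_top)
    have hsg : ContDiff ℝ ((J : ℕ∞) : WithTop ℕ∞) (fderiv ℝ q) :=
      hsm.fderiv_right (by exact_mod_cast le_top)
    refine (norm_iteratedFDeriv_smul_le hsf hsg x
      (show ((J : ℕ) : WithTop ℕ∞) ≤ ((J : ℕ∞) : WithTop ℕ∞) from by exact_mod_cast le_rfl)).trans ?_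
    have hc0 : (0:ℝ) ≤ 2 ^ N * (A * A) * Aq / G11 x ^ (r + (J + 1)) :=
      div_nonneg (by positivity) (pow_nonneg (G11_pos x).le _)
    have hsum : ∑ i ∈ Finset.range (J + 1), (J.choose i : ℝ)
          * ‖iteratedFDeriv ℝ i (fun y : E => -(q y ^ 2)⁻¹) x‖
          * ‖iteratedFDeriv ℝ (J - i) (fderiv ℝ q) x‖
        ≤ 2 ^ J * (2 ^ N * (A * A) * Aq / G11 x ^ (r + (J + 1))) := by
      refine sum_choose_le J (fun i => ‖iteratedFDeriv ℝ i (fun y : E => -(q y ^ 2)⁻¹) x‖)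
        (fun i => ‖iteratedFDeriv ℝ i (fderiv ℝ q) x‖) _ hc0 (fun i hi => ?_)
        (fun i => norm_nonneg _)
      -- scalar part
      have hscalar : ‖iteratedFDeriv ℝ i (fun y : E => -(q y ^ 2)⁻¹) x‖
          ≤ 2 ^ N * (A * A) / G11 x ^ (2 * r + i) := by
        have heq : (fun y : E => -(q y ^ 2)⁻¹) = -(fun y : E => (q y)⁻¹ * (q y)⁻¹) := by
          funext y
          show -(q y ^ 2)⁻¹ = -((q y)⁻¹ * (q y)⁻¹)
          rw [sq, mul_inv]
        rw [heq, iteratedFDeriv_neg_apply, norm_neg]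
        have hpc : ContDiff ℝ ((⊤:ℕ∞) : WithTop ℕ∞) (fun y : E => (q y)⁻¹) :=
          hsm.inv (fun y => (hqpos y).ne')
        refine (norm_iteratedFDeriv_mul_le hpc hpc x
          (show (i : WithTop ℕ∞) ≤ ((⊤:ℕ∞) : WithTop ℕ∞) from by exact_mod_cast le_top)).trans ?_
        have hinner : ∑ a ∈ Finset.range (i + 1), (i.choose a : ℝ)
              * ‖iteratedFDeriv ℝ a (fun y : E => (q y)⁻¹) x‖
              * ‖iteratedFDeriv ℝ (i - a) (fun y : E => (q y)⁻¹) x‖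
            ≤ 2 ^ i * (A * A / G11 x ^ (2 * r + i)) := by
          refine sum_choose_le i (fun a => ‖iteratedFDeriv ℝ a (fun y : E => (q y)⁻¹) x‖)
            (fun a => ‖iteratedFDeriv ℝ a (fun y : E => (q y)⁻¹) x‖) _
            (div_nonneg (by positivity) (pow_nonneg (G11_pos x).le _)) (fun a ha => ?_)
            (fun a => norm_nonneg _)
          have e1 := hIH q hsm hq hlow a (by omega) (by omega) x
          have e2 := hIH q hsm hq hlow (i - a) (by omega) (by omega) x
          calc ‖iteratedFDeriv ℝ a (fun y : E => (q y)⁻¹) x‖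
                * ‖iteratedFDeriv ℝ (i - a) (fun y : E => (q y)⁻¹) x‖
              ≤ A / G11 x ^ (r + a) * (A / G11 x ^ (r + (i - a))) :=
                mul_le_mul e1 e2 (norm_nonneg _)
                  (div_nonneg hA.le (pow_nonneg (G11_pos x).le _))
            _ = A * A / G11 x ^ (2 * r + i) :=
                div_G_mul x A A (by omega)
        refine hinner.trans (le_of_le_of_eq (mul_le_mul_of_nonneg_right
          (pow_le_pow_right₀ (one_le_two (α := ℝ)) (show i ≤ N by omega))
          (div_nonneg (mul_nonneg hA.le hA.le) (pow_nonneg (G11_pos x).le _)))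
          (by ring))
      -- fderiv q part
      have hgb : ‖iteratedFDeriv ℝ (J - i) (fderiv ℝ q) x‖
          ≤ Aq * G11 x ^ r / G11 x ^ ((J - i) + 1) := by
        rw [norm_iteratedFDeriv_fderiv]
        have := hq ((J - i) + 1) (by omega) x
        rwa [show 0 + ((J - i) + 1) = (J - i) + 1 by omega] at this
      calc ‖iteratedFDeriv ℝ i (fun y : E => -(q y ^ 2)⁻¹) x‖
            * ‖iteratedFDeriv ℝ (J - i) (fderiv ℝ q) x‖
          ≤ 2 ^ N * (A * A) / G11 x ^ (2 * r + i) * (Aq * G11 x ^ r / G11 x ^ ((J - i) + 1)) :=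
            mul_le_mul hscalar hgb (norm_nonneg _)
              (div_nonneg (by positivity) (pow_nonneg (G11_pos x).le _))
        _ = 2 ^ N * (A * A) * Aq / G11 x ^ (r + (J + 1)) := by
            rw [div_mul_div_comm, ← pow_add,
              show 2 ^ N * (A * A) * (Aq * G11 x ^ r)
                = 2 ^ N * (A * A) * Aq * G11 x ^ r by ring,
              div_G_cancel x _ (show 2 * r + i + ((J - i) + 1) = r + (r + (J + 1)) by omega)]
    refine hsum.trans ?_
    rw [show (2:ℝ) ^ J * (2 ^ N * (A * A) * Aq / G11 x ^ (r + (J + 1)))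
      = 2 ^ J * (2 ^ N * (A * A) * Aq) / G11 x ^ (r + (J + 1)) by ring]
    refine (div_le_div_iff_of_pos_right (pow_pos (G11_pos x) _)).2 ?_
    have hJN : (2:ℝ) ^ J ≤ 2 ^ N := pow_le_pow_right₀ one_le_two (by omega)
    have h2 : (2:ℝ) ^ (2 * N) = 2 ^ N * 2 ^ N := by rw [two_mul, pow_add]
    have h3 : (2:ℝ) ^ N * (2 ^ N * (A * A) * Aq) = 2 ^ (2 * N) * (A * A * Aq) := by
      rw [h2]; ring
    linarith [mul_le_mul_of_nonneg_right hJN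
      (show (0:ℝ) ≤ 2 ^ N * (A * A) * Aq by positivity), hA.le]
end E
section F
variable {E : Type*} [NormedAddCommGroup E] [InnerProductSpace ℝ E]

lemma mul_exp_neg_le_one {t : ℝ} (ht : 0 ≤ t) : t * Real.exp (-t) ≤ 1 := by
  have h1 : t ≤ Real.exp t := by linarith [Real.add_one_le_exp t]
  calc t * Real.exp (-t) ≤ Real.exp t * Real.exp (-t) :=
        mul_le_mul_of_nonneg_right h1 (Real.exp_pos _).le
    _ = 1 := by rw [← Real.exp_add]; simp

lemma mul_exp_div_le {u T : ℝ} (hu : 0 ≤ u) (hT : 0 < T) : u * Real.exp (-(u / T)) ≤ T := by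
  have h := mul_exp_neg_le_one (div_nonneg hu hT.le)
  calc u * Real.exp (-(u / T)) = T * (u / T * Real.exp (-(u / T))) := by
        field_simp
    _ ≤ T * 1 := mul_le_mul_of_nonneg_left h hT.le
    _ = T := mul_one T

lemma exp_step {u : ℝ} (hu : 0 ≤ u) (a : ℕ) :
    u * Real.exp (-(u / 2 ^ a)) ≤ 2 ^ (a + 1) * Real.exp (-(u / 2 ^ (a + 1))) := by
  have hsplit : -(u / 2 ^ a) = -(u / 2 ^ (a + 1)) + -(u / 2 ^ (a + 1)) := by
    rw [pow_succ]
    field_simp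
    ring
  rw [hsplit, Real.exp_add]
  calc u * (Real.exp (-(u / 2 ^ (a + 1))) * Real.exp (-(u / 2 ^ (a + 1))))
      = u * Real.exp (-(u / 2 ^ (a + 1))) * Real.exp (-(u / 2 ^ (a + 1))) := by ring
    _ ≤ 2 ^ (a + 1) * Real.exp (-(u / 2 ^ (a + 1))) :=
        mul_le_mul_of_nonneg_right (mul_exp_div_le hu (by positivity)) (Real.exp_pos _).le

lemma exp_div_mono {u : ℝ} (hu : 0 ≤ u) {a b : ℕ} (hab : a ≤ b) :
    Real.exp (-(u / 2 ^ a)) ≤ Real.exp (-(u / 2 ^ b)) := by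
  rw [Real.exp_le_exp, neg_le_neg_iff]
  exact div_le_div_of_nonneg_left hu (pow_pos two_pos a) (pow_le_pow_right₀ one_le_two hab)
end F
section F2
variable {E : Type*} [NormedAddCommGroup E] [InnerProductSpace ℝ E]

lemma ddr11 {a b d : ℝ} (h : a ≤ b) (hd : 0 < d) : a / d ≤ b / d :=
  (div_le_div_iff_of_pos_right hd).2 h

lemma bnd_exp (N r : ℕ) (Aq cq Ap : ℝ) (hAq : 0 < Aq) (hcq : 0 < cq) (hAp : 0 < Ap) :
    ∃ K, 0 < K ∧ ∀ ε : ℝ, 0 < ε → ∀ q : E → ℝ,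
      ContDiff ℝ ((⊤:ℕ∞) : WithTop ℕ∞) q →
      (∀ x, q x ≤ Aq * G11 x ^ r) →
      (∀ x, cq * G11 x ^ r ≤ q x) →
      (∀ j, j ≤ N → ∀ x, ‖iteratedFDeriv ℝ j (fun y => (q y)⁻¹) x‖ ≤ Ap / G11 x ^ (r + j)) →
      ∀ i, 1 ≤ i → i ≤ N → ∀ x,
        ‖iteratedFDeriv ℝ i (fun y => Real.exp (-ε * (q y)⁻¹)) x‖
          ≤ K * (ε * (q x)⁻¹ * Real.exp (-(ε * (q x)⁻¹ / 2 ^ i))) / G11 x ^ i := by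
  suffices h : ∀ J : ℕ, ∃ K, 0 < K ∧ ∀ ε : ℝ, 0 < ε → ∀ q : E → ℝ,
      ContDiff ℝ ((⊤:ℕ∞) : WithTop ℕ∞) q →
      (∀ x, q x ≤ Aq * G11 x ^ r) →
      (∀ x, cq * G11 x ^ r ≤ q x) →
      (∀ j, j ≤ N → ∀ x, ‖iteratedFDeriv ℝ j (fun y => (q y)⁻¹) x‖ ≤ Ap / G11 x ^ (r + j)) →
      ∀ i, 1 ≤ i → i ≤ J → i ≤ N → ∀ x,
        ‖iteratedFDeriv ℝ i (fun y => Real.exp (-ε * (q y)⁻¹)) x‖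
          ≤ K * (ε * (q x)⁻¹ * Real.exp (-(ε * (q x)⁻¹ / 2 ^ i))) / G11 x ^ i by
    obtain ⟨K, hK, hh⟩ := h N
    exact ⟨K, hK, fun ε hε q h1 h2 h3 h4 i hi1 hiN =>
      hh ε hε q h1 h2 h3 h4 i hi1 hiN hiN⟩
  intro J
  induction J with
  | zero => exact ⟨1, one_pos, fun ε hε q h1 h2 h3 h4 i hi1 hi0 => by omega⟩
  | succ J IH =>
    obtain ⟨K, hK, hIH⟩ := IH
    set K' : ℝ := K + Ap * Aq * (1 + K * 2 ^ (N + 1)) with hK'def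
    have hK'pos : 0 < K' := by positivity
    refine ⟨2 ^ N * K', by positivity, fun ε hε q hsm hup hlow hpbnd i hi1 hiJ hiN x => ?_⟩
    have hqpos : ∀ y : E, 0 < q y :=
      fun y => lt_of_lt_of_le (mul_pos hcq (pow_pos (G11_pos y) _)) (hlow y)
    have hp0 : 0 < (q x)⁻¹ := inv_pos.2 (hqpos x)
    have hu0 : 0 ≤ ε * (q x)⁻¹ := mul_nonneg hε.le hp0.le
    rcases Nat.lt_or_ge i (J + 1) with hlt | hge
    · refine (hIH ε hε q hsm hup hlow hpbnd i hi1 (by omega) hiN x).trans ?_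
      refine ddr11 ?_ (pow_pos (G11_pos x) _)
      have h1 : K ≤ 2 ^ N * K' := by
        have h2 : (1:ℝ) ≤ 2 ^ N := one_le_pow₀ one_le_two
        nlinarith [mul_pos (mul_pos hAp hAq)
          (show (0:ℝ) < 1 + K * 2 ^ (N + 1) by positivity)]
      exact mul_le_mul_of_nonneg_right h1 (mul_nonneg hu0 (Real.exp_pos _).le)
    obtain rfl : i = J + 1 := by omega
    have hpc : ContDiff ℝ ((⊤:ℕ∞) : WithTop ℕ∞) (fun y : E => (q y)⁻¹) :=
      hsm.inv (fun y => (hqpos y).ne')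
    have hh : ContDiff ℝ ((⊤:ℕ∞) : WithTop ℕ∞) (fun y : E => Real.exp (-ε * (q y)⁻¹)) :=
      Real.contDiff_exp.comp (contDiff_const.mul hpc)
    have hder : ∀ y : E, HasFDerivAt (fun y : E => Real.exp (-ε * (q y)⁻¹))
        ((-ε * Real.exp (-ε * (q y)⁻¹)) • fderiv ℝ (fun z : E => (q z)⁻¹) y) y := by
      intro y
      have h1 : HasFDerivAt (fun z : E => (q z)⁻¹) (fderiv ℝ (fun z : E => (q z)⁻¹) y) y :=
        ((hpc.differentiable (by simp)) y).hasFDerivAt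
      have h2 : HasFDerivAt (fun z : E => -ε * (q z)⁻¹)
          ((-ε) • fderiv ℝ (fun z : E => (q z)⁻¹) y) y := h1.const_mul (-ε)
      have h3 := (Real.hasDerivAt_exp (-ε * (q y)⁻¹)).comp_hasFDerivAt y h2
      rw [smul_smul, mul_comm] at h3
      exact h3
    have hfd : fderiv ℝ (fun y : E => Real.exp (-ε * (q y)⁻¹))
        = fun y : E => (-ε * Real.exp (-ε * (q y)⁻¹)) • fderiv ℝ (fun z : E => (q z)⁻¹) y :=
      funext fun y => (hder y).fderiv
    rw [← norm_iteratedFDeriv_fderiv, hfd]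
    have hsf : ContDiff ℝ ((J : ℕ∞) : WithTop ℕ∞)
        (fun y : E => -ε * Real.exp (-ε * (q y)⁻¹)) :=
      (contDiff_const.mul hh).of_le (by exact_mod_cast le_top)
    have hsg : ContDiff ℝ ((J : ℕ∞) : WithTop ℕ∞) (fderiv ℝ (fun z : E => (q z)⁻¹)) :=
      hpc.fderiv_right (by exact_mod_cast le_top)
    refine (norm_iteratedFDeriv_smul_le hsf hsg x
      (show ((J : ℕ) : WithTop ℕ∞) ≤ ((J : ℕ∞) : WithTop ℕ∞) from by exact_mod_cast le_rfl)).trans ?_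
    have hGr : (G11 x ^ r)⁻¹ ≤ Aq * (q x)⁻¹ := by
      have h1 : (Aq * G11 x ^ r)⁻¹ ≤ (q x)⁻¹ := inv_anti₀ (hqpos x) (hup x)
      calc (G11 x ^ r)⁻¹ = Aq * (Aq * G11 x ^ r)⁻¹ := by
            rw [mul_inv, ← mul_assoc, mul_inv_cancel₀ hAq.ne', one_mul]
        _ ≤ Aq * (q x)⁻¹ := mul_le_mul_of_nonneg_left h1 hAq.le
    set c : ℝ := Ap * Aq * (1 + K * 2 ^ (N + 1))
        * (ε * (q x)⁻¹ * Real.exp (-(ε * (q x)⁻¹ / 2 ^ (J + 1)))) / G11 x ^ (J + 1) with hc_def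
    have hc0 : 0 ≤ c := div_nonneg (mul_nonneg (by positivity)
      (mul_nonneg hu0 (Real.exp_pos _).le)) (pow_nonneg (G11_pos x).le _)
    have hsum : ∑ a ∈ Finset.range (J + 1), (J.choose a : ℝ)
          * ‖iteratedFDeriv ℝ a (fun y : E => -ε * Real.exp (-ε * (q y)⁻¹)) x‖
          * ‖iteratedFDeriv ℝ (J - a) (fderiv ℝ (fun z : E => (q z)⁻¹)) x‖
        ≤ 2 ^ J * c := by
      refine sum_choose_le J
        (fun a => ‖iteratedFDeriv ℝ a (fun y : E => -ε * Real.exp (-ε * (q y)⁻¹)) x‖)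
        (fun a => ‖iteratedFDeriv ℝ a (fderiv ℝ (fun z : E => (q z)⁻¹)) x‖) c hc0
        (fun a ha => ?_) (fun a => norm_nonneg _)
      have hscal : ‖iteratedFDeriv ℝ a (fun y : E => -ε * Real.exp (-ε * (q y)⁻¹)) x‖
          ≤ ε * ‖iteratedFDeriv ℝ a (fun y : E => Real.exp (-ε * (q y)⁻¹)) x‖ := by
        have heq : (fun y : E => -ε * Real.exp (-ε * (q y)⁻¹))
            = fun y : E => (-ε) • Real.exp (-ε * (q y)⁻¹) := by
          funext y
          rw [smul_eq_mul]
        rw [heq, iteratedFDeriv_const_smul_apply' (hh.contDiffAt.of_le (by exact_mod_cast le_top))]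
        refine le_of_le_of_eq (ContinuousMultilinearMap.opNorm_smul_le _ _) ?_
        rw [Real.norm_eq_abs, abs_neg, abs_of_pos hε]
      have hgb : ‖iteratedFDeriv ℝ (J - a) (fderiv ℝ (fun z : E => (q z)⁻¹)) x‖
          ≤ Ap / G11 x ^ (r + ((J - a) + 1)) := by
        rw [norm_iteratedFDeriv_fderiv]
        exact hpbnd ((J - a) + 1) (by omega) x
      show ‖iteratedFDeriv ℝ a (fun y : E => -ε * Real.exp (-ε * (q y)⁻¹)) x‖
        * ‖iteratedFDeriv ℝ (J - a) (fderiv ℝ (fun z : E => (q z)⁻¹)) x‖ ≤ c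
      refine le_trans (mul_le_mul_of_nonneg_right hscal (norm_nonneg _)) ?_
      rcases Nat.eq_zero_or_pos a with rfl | hapos
      · -- a = 0
        rw [norm_iteratedFDeriv_zero, Real.norm_eq_abs, Real.abs_exp, Nat.sub_zero]
        rw [Nat.sub_zero] at hgb
        have hexple : Real.exp (-ε * (q x)⁻¹) ≤ Real.exp (-(ε * (q x)⁻¹ / 2 ^ (J + 1))) := by
          rw [Real.exp_le_exp, neg_mul, neg_le_neg_iff]
          calc ε * (q x)⁻¹ / 2 ^ (J + 1) ≤ ε * (q x)⁻¹ / 1 :=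
                div_le_div_of_nonneg_left hu0 one_pos (one_le_pow₀ one_le_two)
            _ = ε * (q x)⁻¹ := div_one _
        calc ε * Real.exp (-ε * (q x)⁻¹)
              * ‖iteratedFDeriv ℝ J (fderiv ℝ (fun z : E => (q z)⁻¹)) x‖
            ≤ ε * Real.exp (-ε * (q x)⁻¹) * (Ap / G11 x ^ (r + (J + 1))) :=
              mul_le_mul_of_nonneg_left hgb (mul_nonneg hε.le (Real.exp_pos _).le)
          _ = ε * Ap * ((G11 x ^ r)⁻¹ * Real.exp (-ε * (q x)⁻¹)) / G11 x ^ (J + 1) := by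
              rw [pow_add]
              ring
          _ ≤ ε * Ap * (Aq * (q x)⁻¹ * Real.exp (-(ε * (q x)⁻¹ / 2 ^ (J + 1)))) / G11 x ^ (J + 1) := by
              refine ddr11 (mul_le_mul_of_nonneg_left ?_ (mul_nonneg hε.le hAp.le))
                (pow_pos (G11_pos x) _)
              exact mul_le_mul hGr hexple (Real.exp_pos _).le (mul_nonneg hAq.le hp0.le)
          _ ≤ c := by
              rw [hc_def]
              refine ddr11 ?_ (pow_pos (G11_pos x) _)
              have h1 : (1:ℝ) ≤ 1 + K * 2 ^ (N + 1) := by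
                have : (0:ℝ) ≤ K * 2 ^ (N + 1) := by positivity
                linarith
              have hX0 : 0 ≤ ε * (q x)⁻¹ * Real.exp (-(ε * (q x)⁻¹ / 2 ^ (J + 1))) :=
                mul_nonneg hu0 (Real.exp_pos _).le
              calc ε * Ap * (Aq * (q x)⁻¹ * Real.exp (-(ε * (q x)⁻¹ / 2 ^ (J + 1))))
                  = Ap * Aq * (ε * (q x)⁻¹ * Real.exp (-(ε * (q x)⁻¹ / 2 ^ (J + 1)))) := by ring
                _ ≤ Ap * Aq * (1 + K * 2 ^ (N + 1))
                    * (ε * (q x)⁻¹ * Real.exp (-(ε * (q x)⁻¹ / 2 ^ (J + 1)))) := by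
                    refine mul_le_mul_of_nonneg_right ?_ hX0
                    exact le_mul_of_one_le_right (mul_pos hAp hAq).le h1
      · -- 1 ≤ a
        have hIHa := hIH ε hε q hsm hup hlow hpbnd a hapos (by omega) (by omega) x
        have hXa0 : 0 ≤ ε * (q x)⁻¹ * Real.exp (-(ε * (q x)⁻¹ / 2 ^ a)) :=
          mul_nonneg hu0 (Real.exp_pos _).le
        have hab : G11 x ^ a * G11 x ^ (r + ((J - a) + 1)) = G11 x ^ r * G11 x ^ (J + 1) := by
          rw [← pow_add, ← pow_add]
          congr 1
          omega
        have s3 : ε * (q x)⁻¹ * Real.exp (-(ε * (q x)⁻¹ / 2 ^ a))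
            ≤ 2 ^ (N + 1) * Real.exp (-(ε * (q x)⁻¹ / 2 ^ (J + 1))) :=
          (exp_step hu0 a).trans (mul_le_mul
            (pow_le_pow_right₀ one_le_two (by omega))
            (exp_div_mono hu0 (by omega)) (Real.exp_pos _).le (by positivity))
        calc ε * ‖iteratedFDeriv ℝ a (fun y : E => Real.exp (-ε * (q y)⁻¹)) x‖
              * ‖iteratedFDeriv ℝ (J - a) (fderiv ℝ (fun z : E => (q z)⁻¹)) x‖
            ≤ ε * (K * (ε * (q x)⁻¹ * Real.exp (-(ε * (q x)⁻¹ / 2 ^ a))) / G11 x ^ a)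
              * (Ap / G11 x ^ (r + ((J - a) + 1))) := by
              refine mul_le_mul (mul_le_mul_of_nonneg_left hIHa hε.le) hgb (norm_nonneg _) ?_
              exact mul_nonneg hε.le (div_nonneg (mul_nonneg hK.le hXa0)
                (pow_nonneg (G11_pos x).le _))
          _ = K * Ap * ε * (ε * (q x)⁻¹ * Real.exp (-(ε * (q x)⁻¹ / 2 ^ a)))
              / (G11 x ^ a * G11 x ^ (r + ((J - a) + 1))) := by ring
          _ = K * Ap * ((G11 x ^ r)⁻¹ * ε)
              * (ε * (q x)⁻¹ * Real.exp (-(ε * (q x)⁻¹ / 2 ^ a))) / G11 x ^ (J + 1) := by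
              rw [hab]
              ring
          _ ≤ c := by
              rw [hc_def]
              refine ddr11 ?_ (pow_pos (G11_pos x) _)
              have s1 : K * Ap * ((G11 x ^ r)⁻¹ * ε)
                    * (ε * (q x)⁻¹ * Real.exp (-(ε * (q x)⁻¹ / 2 ^ a)))
                  ≤ K * Ap * (Aq * (q x)⁻¹ * ε)
                    * (ε * (q x)⁻¹ * Real.exp (-(ε * (q x)⁻¹ / 2 ^ a))) := by
                refine mul_le_mul_of_nonneg_right (mul_le_mul_of_nonneg_left ?_
                  (mul_nonneg hK.le hAp.le)) hXa0
                exact mul_le_mul_of_nonneg_right hGr hε.le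
              refine s1.trans ?_
              calc K * Ap * (Aq * (q x)⁻¹ * ε)
                    * (ε * (q x)⁻¹ * Real.exp (-(ε * (q x)⁻¹ / 2 ^ a)))
                  = K * Ap * Aq * (ε * (q x)⁻¹)
                    * (ε * (q x)⁻¹ * Real.exp (-(ε * (q x)⁻¹ / 2 ^ a))) := by ring
                _ ≤ K * Ap * Aq * (ε * (q x)⁻¹)
                    * (2 ^ (N + 1) * Real.exp (-(ε * (q x)⁻¹ / 2 ^ (J + 1)))) := by
                    refine mul_le_mul_of_nonneg_left s3 ?_
                    exact mul_nonneg (mul_nonneg (mul_nonneg hK.le hAp.le) hAq.le) hu0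
                _ = Ap * Aq * (K * 2 ^ (N + 1))
                    * (ε * (q x)⁻¹ * Real.exp (-(ε * (q x)⁻¹ / 2 ^ (J + 1)))) := by ring
                _ ≤ Ap * Aq * (1 + K * 2 ^ (N + 1))
                    * (ε * (q x)⁻¹ * Real.exp (-(ε * (q x)⁻¹ / 2 ^ (J + 1)))) := by
                    refine mul_le_mul_of_nonneg_right (mul_le_mul_of_nonneg_left
                      (by linarith) (mul_nonneg hAp.le hAq.le))
                      (mul_nonneg hu0 (Real.exp_pos _).le)
    refine hsum.trans ?_
    calc (2:ℝ) ^ J * c ≤ 2 ^ N * c :=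
          mul_le_mul_of_nonneg_right (pow_le_pow_right₀ one_le_two (by omega)) hc0
      _ ≤ 2 ^ N * (K' * (ε * (q x)⁻¹ * Real.exp (-(ε * (q x)⁻¹ / 2 ^ (J + 1))))
          / G11 x ^ (J + 1)) := by
          refine mul_le_mul_of_nonneg_left ?_ (by positivity)
          rw [hc_def]
          refine ddr11 (mul_le_mul_of_nonneg_right ?_
            (mul_nonneg hu0 (Real.exp_pos _).le)) (pow_pos (G11_pos x) _)
          rw [hK'def]
          linarith [hK.le]
      _ = 2 ^ N * K' * (ε * (q x)⁻¹ * Real.exp (-(ε * (q x)⁻¹ / 2 ^ (J + 1))))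
          / G11 x ^ (J + 1) := by ring
end F2
end Aux11

theorem stmt_11 (n m : ℕ) (hn : 1 ≤ n) (hm : 1 ≤ m) (N : ℕ) :
    ∃ C > 0, ∀ ε : ℝ, 0 < ε → ∀ ω : EuclideanSpace ℝ (Fin n), ‖ω‖ = 1 →
      ∀ ξ : EuclideanSpace ℝ (Fin n),
        ‖iteratedFDeriv ℝ N (fun ξ : EuclideanSpace ℝ (Fin n) =>
            (∑ ℓ ∈ Finset.range m, ‖ω - ξ‖ ^ (2 * ℓ) * ‖ξ‖ ^ (2 * (m - 1 - ℓ)))⁻¹ *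
              (Real.exp (-ε * (∑ ℓ ∈ Finset.range m,
                ‖ω - ξ‖ ^ (2 * ℓ) * ‖ξ‖ ^ (2 * (m - 1 - ℓ)))⁻¹) - 1)) ξ‖ ≤
          C * ε * Real.sqrt (1 + ‖ξ‖ ^ 2) ^ (-(4 * (m : ℝ) - 4 + N)) := by
  set E := EuclideanSpace ℝ (Fin n)
  set r : ℕ := 2 * (m - 1) with hr_def
  obtain ⟨Aq, hAq, hQ⟩ := bnd_q (E := E) N m hm
  set cq : ℝ := ((8:ℝ) ^ (m - 1))⁻¹ with hcq_def
  have hcq : 0 < cq := by positivity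
  obtain ⟨Ap, hApos, hPinv⟩ := bnd_inv (E := E) N r Aq cq hAq hcq
  obtain ⟨K, hKpos, hexp⟩ := bnd_exp (E := E) N r Aq cq Ap hAq hcq hApos
  set K1 : ℝ := (K + 1) * cq⁻¹ with hK1_def
  have hK1 : 0 < K1 := by positivity
  refine ⟨2 ^ N * Ap * K1, by positivity, fun ε hε ω hω ξ => ?_⟩
  set qf : E → ℝ := fun x => ∑ ℓ ∈ Finset.range m,
    ‖x - ω‖ ^ (2 * ℓ) * ‖x - (0:E)‖ ^ (2 * (m - 1 - ℓ)) with hqf_def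
  have hqbnd : Bnd N qf Aq r 0 := hQ ω hω
  have hsmq : ContDiff ℝ ((⊤:ℕ∞) : WithTop ℕ∞) qf := contDiff_qf m ω
  have hlowq : ∀ x, cq * G11 x ^ r ≤ qf x := fun x => q_lower m hm ω hω x
  have hqpos : ∀ x, 0 < qf x :=
    fun x => lt_of_lt_of_le (mul_pos hcq (pow_pos (G11_pos x) _)) (hlowq x)
  have hup : ∀ x, qf x ≤ Aq * G11 x ^ r := by
    intro x
    have h0 := hqbnd 0 (Nat.zero_le N) x
    rw [norm_iteratedFDeriv_zero, Real.norm_eq_abs,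
      show (0 + 0 : ℕ) = 0 from rfl, pow_zero, div_one] at h0
    exact (le_abs_self _).trans h0
  have hpb : ∀ j, j ≤ N → ∀ x,
      ‖iteratedFDeriv ℝ j (fun y => (qf y)⁻¹) x‖ ≤ Ap / G11 x ^ (r + j) :=
    hPinv qf hsmq hqbnd hlowq
  -- identify the function in the statement
  have hfeq : (fun ξ : E =>
        (∑ ℓ ∈ Finset.range m, ‖ω - ξ‖ ^ (2 * ℓ) * ‖ξ‖ ^ (2 * (m - 1 - ℓ)))⁻¹ *
          (Real.exp (-ε * (∑ ℓ ∈ Finset.range m,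
            ‖ω - ξ‖ ^ (2 * ℓ) * ‖ξ‖ ^ (2 * (m - 1 - ℓ)))⁻¹) - 1))
      = fun x : E => (qf x)⁻¹ * (Real.exp (-ε * (qf x)⁻¹) - 1) := by
    funext x
    have hsum_eq : (∑ ℓ ∈ Finset.range m, ‖ω - x‖ ^ (2 * ℓ) * ‖x‖ ^ (2 * (m - 1 - ℓ)))
        = qf x := by
      refine Finset.sum_congr rfl fun ℓ _ => ?_
      rw [norm_sub_rev ω x, sub_zero]
    rw [hsum_eq]
  rw [hfeq]
  -- smoothness of factors
  have hpc : ContDiff ℝ ((⊤:ℕ∞) : WithTop ℕ∞) (fun y : E => (qf y)⁻¹) :=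
    hsmq.inv (fun y => (hqpos y).ne')
  have hgc : ContDiff ℝ ((⊤:ℕ∞) : WithTop ℕ∞)
      (fun x : E => Real.exp (-ε * (qf x)⁻¹) - 1) :=
    (Real.contDiff_exp.comp (contDiff_const.mul hpc)).sub contDiff_const
  -- bound on derivatives of the second factor
  have hg : ∀ i, i ≤ N → ∀ x : E,
      ‖iteratedFDeriv ℝ i (fun y : E => Real.exp (-ε * (qf y)⁻¹) - 1) x‖
        ≤ K1 * ε / G11 x ^ (r + i) := by
    intro i hiN x
    have hu0 : 0 ≤ ε * (qf x)⁻¹ := mul_nonneg hε.le (inv_nonneg.2 (hqpos x).le)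
    have hpx : (qf x)⁻¹ ≤ cq⁻¹ / G11 x ^ r := by
      have h1 : (qf x)⁻¹ ≤ (cq * G11 x ^ r)⁻¹ :=
        inv_anti₀ (mul_pos hcq (pow_pos (G11_pos x) _)) (hlowq x)
      rwa [mul_inv, ← div_eq_mul_inv] at h1
    rcases Nat.eq_zero_or_pos i with rfl | hi1
    · rw [norm_iteratedFDeriv_zero, Real.norm_eq_abs]
      have hexp1 : Real.exp (-ε * (qf x)⁻¹) ≤ 1 := by
        rw [show (1:ℝ) = Real.exp 0 from Real.exp_zero.symm]
        exact Real.exp_le_exp.2 (by rw [neg_mul]; exact neg_nonpos.2 hu0)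
      rw [abs_of_nonpos (by linarith)]
      have h2 : 1 - Real.exp (-ε * (qf x)⁻¹) ≤ ε * (qf x)⁻¹ := by
        have := Real.add_one_le_exp (-(ε * (qf x)⁻¹))
        rw [← neg_mul] at this
        linarith
      calc -(Real.exp (-ε * (qf x)⁻¹) - 1) = 1 - Real.exp (-ε * (qf x)⁻¹) := by ring
        _ ≤ ε * (qf x)⁻¹ := h2
        _ ≤ ε * (cq⁻¹ / G11 x ^ r) := mul_le_mul_of_nonneg_left hpx hε.le
        _ = cq⁻¹ * ε / G11 x ^ r := by ring
        _ ≤ K1 * ε / G11 x ^ (r + 0) := by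
            rw [Nat.add_zero]
            refine ddr11 (mul_le_mul_of_nonneg_right ?_ hε.le) (pow_pos (G11_pos x) _)
            rw [hK1_def]
            have h3 : (0:ℝ) ≤ cq⁻¹ := (inv_nonneg).2 hcq.le
            nlinarith [hKpos.le]
    · obtain ⟨i', rfl⟩ : ∃ i', i = i' + 1 := ⟨i - 1, by omega⟩
      have hfd1 : fderiv ℝ (fun y : E => Real.exp (-ε * (qf y)⁻¹) - 1)
          = fderiv ℝ (fun y : E => Real.exp (-ε * (qf y)⁻¹)) :=
        funext fun y => fderiv_sub_const 1
      rw [← norm_iteratedFDeriv_fderiv, hfd1, norm_iteratedFDeriv_fderiv]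
      refine (hexp ε hε qf hsmq hup hlowq hpb (i' + 1) (by omega) hiN x).trans ?_
      have hexp1 : Real.exp (-(ε * (qf x)⁻¹ / 2 ^ (i' + 1))) ≤ 1 := by
        rw [show (1:ℝ) = Real.exp 0 from Real.exp_zero.symm]
        exact Real.exp_le_exp.2 (neg_nonpos.2 (div_nonneg hu0 (by positivity)))
      calc K * (ε * (qf x)⁻¹ * Real.exp (-(ε * (qf x)⁻¹ / 2 ^ (i' + 1)))) / G11 x ^ (i' + 1)
          ≤ K * (ε * (cq⁻¹ / G11 x ^ r) * 1) / G11 x ^ (i' + 1) := by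
            refine ddr11 (mul_le_mul_of_nonneg_left ?_ hKpos.le) (pow_pos (G11_pos x) _)
            exact mul_le_mul (mul_le_mul_of_nonneg_left hpx hε.le) hexp1
              (Real.exp_pos _).le (mul_nonneg hε.le
                (div_nonneg (inv_nonneg.2 hcq.le) (pow_nonneg (G11_pos x).le _)))
        _ = K * cq⁻¹ * ε / (G11 x ^ r * G11 x ^ (i' + 1)) := by ring
        _ = K * cq⁻¹ * ε / G11 x ^ (r + (i' + 1)) := by rw [← pow_add]
        _ ≤ K1 * ε / G11 x ^ (r + (i' + 1)) := by
            refine ddr11 (mul_le_mul_of_nonneg_right ?_ hε.le) (pow_pos (G11_pos x) _)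
            rw [hK1_def]
            have h3 : (0:ℝ) ≤ cq⁻¹ := (inv_nonneg).2 hcq.le
            nlinarith
  -- final Leibniz bound
  refine (norm_iteratedFDeriv_mul_le hpc hgc ξ
    (show (N : WithTop ℕ∞) ≤ ((⊤:ℕ∞) : WithTop ℕ∞) from by exact_mod_cast le_top)).trans ?_
  have hc0 : (0:ℝ) ≤ Ap * (K1 * ε) / G11 ξ ^ (2 * r + N) :=
    div_nonneg (by positivity) (pow_nonneg (G11_pos ξ).le _)
  have hsum : ∑ k ∈ Finset.range (N + 1), (N.choose k : ℝ)
        * ‖iteratedFDeriv ℝ k (fun y : E => (qf y)⁻¹) ξ‖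
        * ‖iteratedFDeriv ℝ (N - k) (fun y : E => Real.exp (-ε * (qf y)⁻¹) - 1) ξ‖
      ≤ 2 ^ N * (Ap * (K1 * ε) / G11 ξ ^ (2 * r + N)) := by
    refine sum_choose_le N (fun k => ‖iteratedFDeriv ℝ k (fun y : E => (qf y)⁻¹) ξ‖)
      (fun k => ‖iteratedFDeriv ℝ k (fun y : E => Real.exp (-ε * (qf y)⁻¹) - 1) ξ‖)
      _ hc0 (fun k hk => ?_) (fun k => norm_nonneg _)
    calc ‖iteratedFDeriv ℝ k (fun y : E => (qf y)⁻¹) ξ‖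
          * ‖iteratedFDeriv ℝ (N - k) (fun y : E => Real.exp (-ε * (qf y)⁻¹) - 1) ξ‖
        ≤ Ap / G11 ξ ^ (r + k) * (K1 * ε / G11 ξ ^ (r + (N - k))) :=
          mul_le_mul (hpb k hk ξ) (hg (N - k) (by omega) ξ) (norm_nonneg _)
            (div_nonneg hApos.le (pow_nonneg (G11_pos ξ).le _))
      _ = Ap * (K1 * ε) / G11 ξ ^ (2 * r + N) := div_G_mul ξ Ap (K1 * ε) (by omega)
  refine hsum.trans (le_of_eq ?_)
  have hcast : ((2 * r + N : ℕ) : ℝ) = 4 * (m : ℝ) - 4 + N := by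
    rw [hr_def]
    push_cast [Nat.cast_sub hm]
    ring
  have hrpow : Real.sqrt (1 + ‖ξ‖ ^ 2) ^ (-(4 * (m : ℝ) - 4 + N))
      = (G11 ξ ^ (2 * r + N) : ℝ)⁻¹ := by
    rw [show Real.sqrt (1 + ‖ξ‖ ^ 2) = G11 ξ from rfl, ← hcast,
      Real.rpow_neg (G11_pos ξ).le, Real.rpow_natCast]
  rw [hrpow]
  ring
end

section
/- Let n and m be positive integers with n > 2m, let k ≥ 1 be an integer, and let A > 0. Suppose F : (0,∞) → ℂ is k-times continuously differentiable and satisfies |F^{(N)}(r)| ≤ A ⟨r⟩^{(n+1)/2 − 2m − N} for all r > 0 and 0 ≤ N ≤ k. Then there exists C > 0 (depending only on n, m, k, A) such that for all r > 0 and all λ with 0 < λ < 1, λ^{k−1} |d^k/dλ^k ( e^{iλr} r^{2m−n} F(λr) )| ≤ C ( r^{2m+1−n} + r^{k−(n−1)/2} ). -/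
set_option maxHeartbeats 1000000

open Real Set

lemma expDeriv13 (r c : ℝ) (i : ℕ) :
    iteratedDeriv i (fun μ : ℝ => Complex.exp (Complex.I * μ * r) * (c : ℂ)) =
      fun lam : ℝ => (Complex.I * r) ^ i * Complex.exp (Complex.I * lam * r) * (c : ℂ) := by
  induction i with
  | zero => funext lam; simp
  | succ i ih =>
    rw [iteratedDeriv_succ, ih]
    funext lam
    have hin : HasDerivAt (fun μ : ℝ => Complex.I * (μ : ℂ) * r) (Complex.I * 1 * r) lam := by
      exact (Complex.ofRealCLM.hasDerivAt.const_mul Complex.I).mul_const _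
    have h := ((hin.cexp.const_mul ((Complex.I * r) ^ i)).mul_const ((c : ℂ)))
    have h2 : HasDerivAt (fun μ : ℝ => (Complex.I * r) ^ i * Complex.exp (Complex.I * μ * r) * (c : ℂ))
      ((Complex.I * r) ^ (i+1) * Complex.exp (Complex.I * lam * r) * (c : ℂ)) lam := by
      exact h.congr_deriv (by ring)
    exact h2.deriv

lemma idw_open13 (f : ℝ → ℂ) (N : ℕ) {x : ℝ} (hx : x ∈ Set.Ioi (0:ℝ)) :
    iteratedDerivWithin N f (Set.Ioi 0) x = iteratedDeriv N f x := by
  simp only [iteratedDerivWithin, iteratedDeriv,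
    iteratedFDerivWithin_of_isOpen N isOpen_Ioi hx]

lemma scale13 (F : ℝ → ℂ) (k : ℕ) (hF : ContDiffOn ℝ k F (Set.Ioi 0))
    (r : ℝ) (hr : 0 < r) :
    ∀ N : ℕ, N ≤ k → ∀ lam : ℝ, 0 < lam →
      iteratedDerivWithin N (fun μ : ℝ => F (μ * r)) (Set.Ioi 0) lam
        = (r ^ N : ℝ) • iteratedDerivWithin N F (Set.Ioi 0) (lam * r) := by
  intro N
  induction N with
  | zero => intro _ lam _; simp
  | succ N ih =>
    intro hNk lam hlam
    have hlam' : lam ∈ Set.Ioi (0:ℝ) := hlam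
    have hlr : lam * r ∈ Set.Ioi (0:ℝ) := mul_pos hlam hr
    have hu : UniqueDiffWithinAt ℝ (Set.Ioi (0:ℝ)) lam :=
      uniqueDiffOn_Ioi 0 lam hlam
    rw [iteratedDerivWithin_succ, derivWithin_of_isOpen isOpen_Ioi hlam']
    have hEq : (fun x => iteratedDerivWithin N (fun μ : ℝ => F (μ * r)) (Set.Ioi 0) x)
        =ᶠ[nhds lam] (fun x => (r ^ N : ℝ) • iteratedDerivWithin N F (Set.Ioi 0) (x * r)) := by
      filter_upwards [isOpen_Ioi.mem_nhds hlam'] with x hx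
      exact ih (Nat.le_of_succ_le hNk) x hx
    rw [hEq.deriv_eq]
    set g := iteratedDerivWithin N F (Set.Ioi 0) with hg
    have hgd : DifferentiableOn ℝ g (Set.Ioi 0) := by
      apply hF.differentiableOn_iteratedDerivWithin _ (uniqueDiffOn_Ioi 0)
      exact_mod_cast Nat.lt_of_succ_le hNk
    have hgat : DifferentiableAt ℝ g (lam * r) :=
      (hgd _ hlr).differentiableAt (isOpen_Ioi.mem_nhds hlr)
    have hder : HasDerivAt g (iteratedDerivWithin (N+1) F (Set.Ioi 0) (lam * r)) (lam * r) := by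
      have h1 := hgat.hasDerivAt
      have h2 : deriv g (lam * r) = iteratedDerivWithin (N+1) F (Set.Ioi 0) (lam * r) := by
        rw [iteratedDerivWithin_succ,
          derivWithin_of_isOpen isOpen_Ioi hlr]
      rwa [h2] at h1
    have hin : HasDerivAt (fun x : ℝ => x * r) r lam := hasDerivAt_mul_const r
    have hcomp : HasDerivAt (fun x : ℝ => g (x * r))
        (r • iteratedDerivWithin (N+1) F (Set.Ioi 0) (lam * r)) lam :=
      by have := HasDerivAt.scomp lam hder hin; exact this
    have hcs : HasDerivAt (fun x => (r ^ N : ℝ) • g (x * r))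
        ((r ^ N : ℝ) • r • iteratedDerivWithin (N+1) F (Set.Ioi 0) (lam * r)) lam :=
      hcomp.const_smul (r ^ N : ℝ)
    have := hcs.deriv
    rw [this, smul_smul, pow_succ]
lemma key13 (n m k i : ℕ) (hnm : 2 * m < n) (hk : 1 ≤ k) (hik : i ≤ k)
    (r lam : ℝ) (hr : 0 < r) (hl0 : 0 < lam) (hl1 : lam < 1) :
    lam ^ (k - 1) * (r ^ i * r ^ (2 * (m : ℝ) - n) *
        (r ^ (k - i) * Real.sqrt (1 + (lam * r) ^ 2) ^
          (((n : ℝ) + 1) / 2 - 2 * m - ((k - i : ℕ) : ℝ)))) ≤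
      (2 : ℝ) ^ (((n : ℝ) + 1) / 2 + 2 * m + k) *
        (r ^ (2 * (m : ℝ) + 1 - n) + r ^ ((k : ℝ) - ((n : ℝ) - 1) / 2)) := by
  set s : ℝ := lam * r with hs
  have hs0 : 0 < s := mul_pos hl0 hr
  set Q : ℝ := Real.sqrt (1 + s ^ 2) with hQ
  set e : ℝ := ((n : ℝ) + 1) / 2 - 2 * m - ((k - i : ℕ) : ℝ) with he
  set M : ℝ := ((n : ℝ) + 1) / 2 + 2 * m + k with hM
  clear_value s Q e M
  have hcast : ((k - i : ℕ) : ℝ) = (k : ℝ) - i := Nat.cast_sub hik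
  have hQ1 : 1 ≤ Q := by
    have h := Real.sqrt_le_sqrt (show (1:ℝ) ≤ 1 + s ^ 2 by nlinarith)
    simpa [hQ] using h
  have hQ0 : 0 < Q := lt_of_lt_of_le one_pos hQ1
  have hQs : s ≤ Q := by
    have h := Real.sqrt_le_sqrt (show s ^ 2 ≤ 1 + s ^ 2 by nlinarith)
    rw [Real.sqrt_sq hs0.le] at h
    rw [hQ]; exact h
  have hQ2 : Q ≤ 1 + s := by
    rw [hQ]
    have h := Real.sqrt_le_sqrt (show 1 + s^2 ≤ (1+s)^2 by nlinarith)
    rwa [Real.sqrt_sq (by positivity)] at h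
  have heM : e ≤ M := by
    rw [he, hM, hcast]
    have h1 : (i : ℝ) ≤ k := by exact_mod_cast hik
    have h2 : (0:ℝ) ≤ m := by positivity
    linarith
  have hM0 : 0 ≤ M := by
    rw [hM]; positivity
  have h2M : (1:ℝ) ≤ 2 ^ M := by
    rw [show (1:ℝ) = (2:ℝ) ^ (0:ℝ) by simp]
    exact Real.rpow_le_rpow_of_exponent_le one_le_two hM0
  have h2M0 : (0:ℝ) ≤ (2:ℝ) ^ M := by positivity
  -- rewrite LHS in rpow form
  have hL : lam ^ (k - 1) * (r ^ i * r ^ (2 * (m : ℝ) - n) * (r ^ (k - i) * Q ^ e))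
      = lam ^ ((k:ℝ) - 1) * (r ^ ((k:ℝ) + 2 * m - n) * Q ^ e) := by
    have haux : ∀ a b c : ℝ, r ^ a * r ^ b * (r ^ c * Q ^ e) = r ^ (a + b + c) * Q ^ e := by
      intro a b c
      rw [show r ^ a * r ^ b * (r ^ c * Q ^ e) = r ^ a * r ^ b * r ^ c * Q ^ e by ring,
        ← Real.rpow_add hr, ← Real.rpow_add hr]
    rw [← Real.rpow_natCast lam (k - 1), ← Real.rpow_natCast r i,
      ← Real.rpow_natCast r (k - i), Nat.cast_sub hk, Nat.cast_sub hik, Nat.cast_one, haux,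
      show (i:ℝ) + (2 * (m:ℝ) - n) + ((k:ℝ) - (i:ℝ)) = (k:ℝ) + 2 * m - n by ring]
  rw [hL]
  have hbase0 : (0:ℝ) ≤ r ^ (2 * (m : ℝ) + 1 - n) + r ^ ((k : ℝ) - ((n : ℝ) - 1) / 2) := by
    positivity
  have hk1 : (0:ℝ) ≤ (k:ℝ) - 1 := by
    have : (1:ℝ) ≤ k := by exact_mod_cast hk
    linarith
  rcases le_total s 1 with hs1 | hs1
  · -- small s
    have hQe : Q ^ e ≤ 2 ^ M := by
      rcases le_or_gt 0 e with he0 | he0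
      · calc Q ^ e ≤ (2:ℝ) ^ e :=
              Real.rpow_le_rpow hQ0.le (by linarith) he0
          _ ≤ (2:ℝ) ^ M := Real.rpow_le_rpow_of_exponent_le one_le_two heM
      · calc Q ^ e ≤ 1 := Real.rpow_le_one_of_one_le_of_nonpos hQ1 he0.le
          _ ≤ 2 ^ M := h2M
    have hsplit : lam ^ ((k:ℝ) - 1) * (r ^ ((k:ℝ) + 2 * m - n) * Q ^ e)
        = (s ^ ((k:ℝ) - 1) * r ^ (2 * (m:ℝ) + 1 - n)) * Q ^ e := by
      rw [hs, Real.mul_rpow hl0.le hr.le,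
        show (k:ℝ) + 2 * (m:ℝ) - n = ((k:ℝ) - 1) + (2 * (m:ℝ) + 1 - n) by ring,
        Real.rpow_add hr]
      ring
    rw [hsplit]
    have hsk : s ^ ((k:ℝ) - 1) ≤ 1 := Real.rpow_le_one hs0.le hs1 hk1
    calc (s ^ ((k:ℝ) - 1) * r ^ (2 * (m:ℝ) + 1 - n)) * Q ^ e
        ≤ (1 * r ^ (2 * (m:ℝ) + 1 - n)) * 2 ^ M := by
          apply mul_le_mul _ hQe (by positivity) (by positivity)
          exact mul_le_mul_of_nonneg_right hsk (by positivity)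
      _ ≤ 2 ^ M * (r ^ (2 * (m : ℝ) + 1 - n) + r ^ ((k : ℝ) - ((n : ℝ) - 1) / 2)) := by
          rw [one_mul]
          rw [mul_comm]
          apply mul_le_mul_of_nonneg_left _ h2M0
          have : (0:ℝ) ≤ r ^ ((k : ℝ) - ((n : ℝ) - 1) / 2) := by positivity
          linarith
  · -- large s
    have hQe : Q ^ e ≤ 2 ^ M * s ^ e := by
      rcases le_or_gt 0 e with he0 | he0
      · calc Q ^ e ≤ (2 * s) ^ e := by
              apply Real.rpow_le_rpow hQ0.le (by linarith) he0
          _ = 2 ^ e * s ^ e := Real.mul_rpow (by norm_num) hs0.le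
          _ ≤ 2 ^ M * s ^ e := by
              apply mul_le_mul_of_nonneg_right _ (by positivity)
              exact Real.rpow_le_rpow_of_exponent_le one_le_two heM
      · calc Q ^ e ≤ s ^ e := Real.rpow_le_rpow_of_nonpos hs0 hQs he0.le
          _ ≤ 2 ^ M * s ^ e := by
              nlinarith [Real.rpow_pos_of_pos hs0 e]
    set p : ℝ := (i : ℝ) + ((n : ℝ) - 1) / 2 - 2 * m with hp
    set q : ℝ := (i : ℝ) - ((n : ℝ) - 1) / 2 with hq
    clear_value p q
    have hmain : lam ^ ((k:ℝ) - 1) * (r ^ ((k:ℝ) + 2 * m - n) * s ^ e)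
        = lam ^ p * r ^ q := by
      have hpe : p = ((k:ℝ) - 1) + e := by rw [hp, he, hcast]; ring
      have hqe : q = ((k:ℝ) + 2 * m - n) + e := by rw [hq, he, hcast]; ring
      rw [hs, Real.mul_rpow hl0.le hr.le, hpe, hqe, Real.rpow_add hl0, Real.rpow_add hr]
      ring
    have hstep : lam ^ ((k:ℝ) - 1) * (r ^ ((k:ℝ) + 2 * m - n) * Q ^ e)
        ≤ 2 ^ M * (lam ^ p * r ^ q) := by
      rw [← hmain]
      calc lam ^ ((k:ℝ) - 1) * (r ^ ((k:ℝ) + 2 * m - n) * Q ^ e)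
          ≤ lam ^ ((k:ℝ) - 1) * (r ^ ((k:ℝ) + 2 * m - n) * (2 ^ M * s ^ e)) := by
            apply mul_le_mul_of_nonneg_left _ (by positivity)
            exact mul_le_mul_of_nonneg_left hQe (by positivity)
        _ = 2 ^ M * (lam ^ ((k:ℝ) - 1) * (r ^ ((k:ℝ) + 2 * m - n) * s ^ e)) := by ring
    refine le_trans hstep ?_
    apply mul_le_mul_of_nonneg_left _ h2M0
    have hr1 : 1 ≤ r := by
      have : s ≤ r := by
        rw [hs]; nlinarith
      linarith
    rcases le_or_gt 0 p with hp0 | hp0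
    · have h1 : lam ^ p ≤ 1 := Real.rpow_le_one hl0.le hl1.le hp0
      have h2 : r ^ q ≤ r ^ ((k : ℝ) - ((n : ℝ) - 1) / 2) := by
        apply Real.rpow_le_rpow_of_exponent_le hr1
        rw [hq]
        have : (i : ℝ) ≤ k := by exact_mod_cast hik
        linarith
      have h3 : lam ^ p * r ^ q ≤ r ^ ((k : ℝ) - ((n : ℝ) - 1) / 2) := by
        calc lam ^ p * r ^ q ≤ 1 * r ^ q := by
              apply mul_le_mul_of_nonneg_right h1 (by positivity)
          _ = r ^ q := one_mul _
          _ ≤ _ := h2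
      have : (0:ℝ) ≤ r ^ (2 * (m : ℝ) + 1 - n) := by positivity
      linarith
    · have hinv : 1 / r ≤ lam := by
        rw [div_le_iff₀ hr]; nlinarith
      have h1 : lam ^ p ≤ (1 / r) ^ p :=
        Real.rpow_le_rpow_of_nonpos (by positivity) hinv hp0.le
      have h2 : (1 / r) ^ p = r ^ (-p) := by
        rw [one_div, Real.inv_rpow hr.le, ← Real.rpow_neg hr.le]
      have h3 : lam ^ p * r ^ q ≤ r ^ (-p) * r ^ q := by
        apply mul_le_mul_of_nonneg_right _ (by positivity)
        rw [← h2]; exact h1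
      have h4 : r ^ (-p : ℝ) * r ^ q = r ^ (2 * (m:ℝ) + 1 - n) := by
        rw [← Real.rpow_add hr]
        congr 1
        rw [hp, hq]; ring
      have : (0:ℝ) ≤ r ^ ((k : ℝ) - ((n : ℝ) - 1) / 2) := by positivity
      calc lam ^ p * r ^ q ≤ r ^ (-p) * r ^ q := h3
        _ = r ^ (2 * (m:ℝ) + 1 - n) := h4
        _ ≤ _ := by linarith

theorem stmt_13 (n m : ℕ) (hn : 1 ≤ n) (hm : 1 ≤ m) (hnm : 2 * m < n)
    (k : ℕ) (hk : 1 ≤ k) (A : ℝ) (hA : 0 < A)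
    (F : ℝ → ℂ) (hF : ContDiffOn ℝ k F (Set.Ioi 0))
    (hFbound : ∀ r : ℝ, 0 < r → ∀ N : ℕ, N ≤ k →
      ‖iteratedDerivWithin N F (Set.Ioi 0) r‖ ≤
        A * Real.sqrt (1 + r ^ 2) ^ (((n : ℝ) + 1) / 2 - 2 * m - N)) :
    ∃ C > 0, ∀ r : ℝ, 0 < r → ∀ lam : ℝ, 0 < lam → lam < 1 →
      lam ^ (k - 1) *
        ‖iteratedDerivWithin k
            (fun μ : ℝ => Complex.exp (Complex.I * μ * r) *
              (r ^ (2 * (m : ℝ) - n) : ℝ) * F (μ * r)) (Set.Ioi 0) lam‖ ≤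
        C * (r ^ (2 * (m : ℝ) + 1 - n) + r ^ ((k : ℝ) - ((n : ℝ) - 1) / 2)) := by
  set M : ℝ := ((n : ℝ) + 1) / 2 + 2 * m + k with hM
  refine ⟨2 ^ k * (A * 2 ^ M), by positivity, ?_⟩
  intro r hr lam hl0 hl1
  have hlam' : lam ∈ Set.Ioi (0:ℝ) := hl0
  set c : ℝ := r ^ (2 * (m : ℝ) - n) with hc
  have hc0 : 0 < c := Real.rpow_pos_of_pos hr _
  set f : ℝ → ℂ := fun μ : ℝ => Complex.exp (Complex.I * μ * r) * (c : ℂ) with hf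
  set g : ℝ → ℂ := fun μ : ℝ => F (μ * r) with hg
  have hfc : ContDiffOn ℝ k f (Set.Ioi 0) := by
    apply ContDiff.contDiffOn
    exact (Complex.contDiff_exp.comp
      ((contDiff_const.mul Complex.ofRealCLM.contDiff).mul contDiff_const)).mul contDiff_const
  have hgc : ContDiffOn ℝ k g (Set.Ioi 0) :=
    hF.comp ((contDiff_id.mul contDiff_const).contDiffOn) (fun μ hμ => mul_pos hμ hr)
  have hfun : (fun μ : ℝ => Complex.exp (Complex.I * μ * r) *
      (r ^ (2 * (m : ℝ) - n) : ℝ) * F (μ * r)) = fun μ => f μ * g μ := rfl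
  rw [hfun]
  have hmul := norm_iteratedFDerivWithin_mul_le hfc hgc (uniqueDiffOn_Ioi 0) hlam'
    (le_refl (k : WithTop ℕ∞))
  set base : ℝ := r ^ (2 * (m : ℝ) + 1 - n) + r ^ ((k : ℝ) - ((n : ℝ) - 1) / 2) with hbase
  have hbase0 : 0 ≤ base := by rw [hbase]; positivity
  calc lam ^ (k - 1) * ‖iteratedDerivWithin k (fun μ => f μ * g μ) (Set.Ioi 0) lam‖
      = lam ^ (k - 1) * ‖iteratedFDerivWithin ℝ k (fun μ => f μ * g μ) (Set.Ioi 0) lam‖ := by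
        rw [norm_iteratedFDerivWithin_eq_norm_iteratedDerivWithin]
    _ ≤ lam ^ (k - 1) * ∑ i ∈ Finset.range (k + 1), (k.choose i : ℝ) *
          ‖iteratedFDerivWithin ℝ i f (Set.Ioi 0) lam‖ *
          ‖iteratedFDerivWithin ℝ (k - i) g (Set.Ioi 0) lam‖ := by
        exact mul_le_mul_of_nonneg_left hmul (by positivity)
    _ = ∑ i ∈ Finset.range (k + 1), lam ^ (k - 1) * ((k.choose i : ℝ) *
          ‖iteratedFDerivWithin ℝ i f (Set.Ioi 0) lam‖ *
          ‖iteratedFDerivWithin ℝ (k - i) g (Set.Ioi 0) lam‖) := Finset.mul_sum _ _ _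
    _ ≤ ∑ i ∈ Finset.range (k + 1), (k.choose i : ℝ) * (A * (2 ^ M * base)) := by
        apply Finset.sum_le_sum
        intro i hi
        have hik : i ≤ k := Nat.lt_succ_iff.mp (Finset.mem_range.mp hi)
        have hfi : ‖iteratedFDerivWithin ℝ i f (Set.Ioi 0) lam‖ = r ^ i * c := by
          rw [norm_iteratedFDerivWithin_eq_norm_iteratedDerivWithin,
            idw_open13 f i hlam', hf, expDeriv13]
          rw [norm_mul, norm_mul, norm_pow, norm_mul]
          have hE : ‖Complex.exp (Complex.I * lam * r)‖ = 1 := by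
            rw [show Complex.I * lam * r = ((lam * r : ℝ) : ℂ) * Complex.I by push_cast; ring]
            exact Complex.norm_exp_ofReal_mul_I _
          simp [Complex.norm_exp, hE, abs_of_pos hr, abs_of_pos hc0]
        have hgi : ‖iteratedFDerivWithin ℝ (k - i) g (Set.Ioi 0) lam‖ ≤
            r ^ (k - i) * (A * Real.sqrt (1 + (lam * r) ^ 2) ^
              (((n : ℝ) + 1) / 2 - 2 * m - ((k - i : ℕ) : ℝ))) := by
          rw [norm_iteratedFDerivWithin_eq_norm_iteratedDerivWithin, hg,
            scale13 F k hF r hr (k - i) (Nat.sub_le k i) lam hl0, norm_smul,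
            Real.norm_eq_abs, abs_of_pos (pow_pos hr _)]
          exact mul_le_mul_of_nonneg_left
            (hFbound (lam * r) (mul_pos hl0 hr) (k - i) (Nat.sub_le k i)) (by positivity)
        have hkey := key13 n m k i hnm hk hik r lam hr hl0 hl1
        rw [← hc, ← hM, ← hbase] at hkey
        calc lam ^ (k - 1) * ((k.choose i : ℝ) *
              ‖iteratedFDerivWithin ℝ i f (Set.Ioi 0) lam‖ *
              ‖iteratedFDerivWithin ℝ (k - i) g (Set.Ioi 0) lam‖)
            ≤ lam ^ (k - 1) * ((k.choose i : ℝ) * (r ^ i * c) *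
              (r ^ (k - i) * (A * Real.sqrt (1 + (lam * r) ^ 2) ^
                (((n : ℝ) + 1) / 2 - 2 * m - ((k - i : ℕ) : ℝ))))) := by
              rw [hfi]
              apply mul_le_mul_of_nonneg_left _ (by positivity)
              apply mul_le_mul_of_nonneg_left hgi (by positivity)
          _ = (k.choose i : ℝ) * (A * (lam ^ (k - 1) * (r ^ i * c *
                (r ^ (k - i) * Real.sqrt (1 + (lam * r) ^ 2) ^
                  (((n : ℝ) + 1) / 2 - 2 * m - ((k - i : ℕ) : ℝ)))))) := by ring
          _ ≤ (k.choose i : ℝ) * (A * (2 ^ M * base)) := by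
              apply mul_le_mul_of_nonneg_left _ (by positivity)
              exact mul_le_mul_of_nonneg_left hkey hA.le
    _ = 2 ^ k * (A * 2 ^ M) * base := by
        rw [← Finset.sum_mul]
        have hsum : ∑ i ∈ Finset.range (k + 1), (k.choose i : ℝ) = 2 ^ k := by
          rw [← Nat.cast_sum]
          rw [Nat.sum_range_choose]
          push_cast
          ring
        rw [hsum]
        ring
end

section
/- Let n and m be positive integers with n > 2m and m ≥ 2, let k ≥ 1 be an integer, and let A > 0. Suppose F : (0,∞) → ℂ is k-times continuously differentiable and satisfies: (i) |F^{(N)}(r)| ≤ A ⟨r⟩^{(n+1)/2 − 2m − N} for all r > 0 and 0 ≤ N ≤ min(k, 2m−1); (ii) |F^{(N)}(r)| ≤ A ⟨r⟩^{(n+1)/2 − 2m − N} for all r ≥ 1 and 0 ≤ N ≤ k; (iii) if k ≥ 2m, then |F^{(2m)}(r)| ≤ A(1 + |log r|) for 0 < r < 1; and (iv) |F^{(N)}(r)| ≤ A r^{2m−N} for 0 < r < 1 and 2m < N ≤ k. Then there exists C > 0 (depending only on n, m, k, A) such that for all r > 0 and all λ with 0 < λ < 1, λ^{k−1} |d^k/dλ^k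 ( e^{iλr} r^{2m−n} F(λr) )| ≤ C ( r^{2m+1−n} + r^{k−(n−1)/2} ). -/
open Real Set
set_option maxHeartbeats 1000000

private lemma exp_factor_iter (r : ℝ) (c : ℂ) (i : ℕ) :
    iteratedDeriv i (fun μ : ℝ => Complex.exp (Complex.I * μ * r) * c) =
      fun μ : ℝ => (Complex.I * r) ^ i * (Complex.exp (Complex.I * μ * r) * c) := by
  have hd : ∀ μ : ℝ, HasDerivAt (fun μ : ℝ => Complex.exp (Complex.I * μ * r) * c)
      ((Complex.I * r) * (Complex.exp (Complex.I * μ * r) * c)) μ := by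
    intro μ
    have h1 : HasDerivAt (fun μ : ℝ => (μ : ℂ) • (Complex.I * r)) (Complex.I * r) μ := by
      simpa using (hasDerivAt_id μ).smul_const (Complex.I * (r:ℂ))
    have h1' : HasDerivAt (fun μ : ℝ => Complex.I * μ * r) (Complex.I * r) μ := by
      convert h1 using 2 with μ
      simp [Complex.real_smul]; ring
    have := (h1'.cexp).mul_const c
    exact this.congr_deriv (by ring)
  induction i with
  | zero => simp
  | succ i ih =>
    funext μ
    rw [iteratedDeriv_succ, ih]
    have : deriv (fun μ : ℝ => (Complex.I * r) ^ i *
        (Complex.exp (Complex.I * μ * r) * c)) μ =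
        (Complex.I * r) ^ i * ((Complex.I * r) * (Complex.exp (Complex.I * μ * r) * c)) := by
      rw [deriv_const_mul _ (hd μ).differentiableAt, (hd μ).deriv]
    rw [this]; ring

private lemma scale_iter {F : ℝ → ℂ} {r : ℝ} (hr : 0 < r) {k : ℕ}
    (hF : ContDiffOn ℝ k F (Set.Ioi 0)) :
    ∀ N, N ≤ k → ∀ x ∈ Set.Ioi (0:ℝ),
      iteratedDerivWithin N (fun μ : ℝ => F (μ * r)) (Set.Ioi 0) x =
        (r ^ N : ℝ) • iteratedDerivWithin N F (Set.Ioi 0) (x * r) := by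
  intro N
  induction N with
  | zero => intro _ x hx; simp
  | succ N ih =>
    intro hNk x hx
    have hNk' : N ≤ k := Nat.le_of_succ_le hNk
    have hxr : x * r ∈ Set.Ioi (0:ℝ) := mul_pos hx hr
    set H := iteratedDerivWithin N F (Set.Ioi 0) with hH
    have hHd : DifferentiableAt ℝ H (x * r) := by
      have := hF.differentiableOn_iteratedDerivWithin
        (m := N) (by exact_mod_cast Nat.lt_of_succ_le hNk) (uniqueDiffOn_Ioi 0)
      exact (this (x*r) hxr).differentiableAt (isOpen_Ioi.mem_nhds hxr)
    have hcomp : HasDerivAt (fun y : ℝ => (r ^ N : ℝ) • H (y * r))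
        ((r ^ N : ℝ) • (r • deriv H (x * r))) x := by
      have h2 : HasDerivAt (fun y : ℝ => y * r) r x := hasDerivAt_mul_const r
      exact ((hHd.hasDerivAt.scomp x h2)).const_smul (r ^ N : ℝ)
    have heq : (fun y : ℝ => (r ^ N : ℝ) • H (y * r))
        =ᶠ[nhds x] iteratedDerivWithin N (fun μ : ℝ => F (μ * r)) (Set.Ioi 0) := by
      filter_upwards [isOpen_Ioi.mem_nhds hx] with y hy
      exact (ih hNk' y hy).symm
    rw [iteratedDerivWithin_succ,
      derivWithin_of_isOpen isOpen_Ioi hx, ← heq.deriv_eq, hcomp.deriv]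
    rw [iteratedDerivWithin_succ,
      derivWithin_of_isOpen isOpen_Ioi hxr]
    rw [smul_smul, pow_succ]

private lemma itDW_open {f : ℝ → ℂ} {s : Set ℝ} (hs : IsOpen s) {x : ℝ} (hx : x ∈ s) (n : ℕ) :
    iteratedDerivWithin n f s x = iteratedDeriv n f x := by
  rw [iteratedDerivWithin_eq_iteratedFDerivWithin, iteratedDeriv_eq_iteratedFDeriv,
    iteratedFDerivWithin_of_isOpen n hs hx]

theorem stmt_15 (n m : ℕ) (hn : 1 ≤ n) (hm : 2 ≤ m) (hnm : 2 * m < n)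
    (k : ℕ) (hk : 1 ≤ k) (A : ℝ) (hA : 0 < A)
    (F : ℝ → ℂ) (hF : ContDiffOn ℝ k F (Set.Ioi 0))
    (hF1 : ∀ r : ℝ, 0 < r → ∀ N : ℕ, N ≤ min k (2 * m - 1) →
      ‖iteratedDerivWithin N F (Set.Ioi 0) r‖ ≤
        A * Real.sqrt (1 + r ^ 2) ^ (((n : ℝ) + 1) / 2 - 2 * m - N))
    (hF2 : ∀ r : ℝ, 1 ≤ r → ∀ N : ℕ, N ≤ k →
      ‖iteratedDerivWithin N F (Set.Ioi 0) r‖ ≤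
        A * Real.sqrt (1 + r ^ 2) ^ (((n : ℝ) + 1) / 2 - 2 * m - N))
    (hF3 : 2 * m ≤ k → ∀ r : ℝ, 0 < r → r < 1 →
      ‖iteratedDerivWithin (2 * m) F (Set.Ioi 0) r‖ ≤ A * (1 + |Real.log r|))
    (hF4 : ∀ N : ℕ, 2 * m < N → N ≤ k → ∀ r : ℝ, 0 < r → r < 1 →
      ‖iteratedDerivWithin N F (Set.Ioi 0) r‖ ≤ A * r ^ (2 * (m : ℝ) - N)) :
    ∃ C > 0, ∀ r : ℝ, 0 < r → ∀ lam : ℝ, 0 < lam → lam < 1 →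
      lam ^ (k - 1) *
        ‖iteratedDerivWithin k
            (fun μ : ℝ => Complex.exp (Complex.I * μ * r) *
              (r ^ (2 * (m : ℝ) - n) : ℝ) * F (μ * r)) (Set.Ioi 0) lam‖ ≤
        C * (r ^ (2 * (m : ℝ) + 1 - n) + r ^ ((k : ℝ) - ((n : ℝ) - 1) / 2)) := by
  set e : ℝ := (k:ℝ) - 1 + ((n:ℝ)+1)/2 - 2*m with he
  set Q : ℝ := ((n:ℝ)+1)/2 + 2*m + k with hQdef
  have hQ0 : (0:ℝ) ≤ Q := by positivity
  set K : ℝ := Real.sqrt 2 ^ Q with hKdef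
  have hsqrt2 : (1:ℝ) ≤ Real.sqrt 2 := by
    have := Real.sqrt_le_sqrt (show (1:ℝ) ≤ 2 by norm_num)
    simpa using this
  have hK1 : (1:ℝ) ≤ K := Real.one_le_rpow hsqrt2 hQ0
  refine ⟨A * (K + 2) * 2 ^ k, by positivity, ?_⟩
  intro r hr lam hlam0 hlam1
  have hre : (0:ℝ) < r ^ e := Real.rpow_pos_of_pos hr e
  have hcastk : ((k - 1 : ℕ) : ℝ) = (k:ℝ) - 1 := by
    have := Nat.cast_sub (R := ℝ) hk; simpa using this
  -- the key pointwise estimate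
  have key : ∀ j : ℕ, j ≤ k → ∀ s : ℝ, 0 < s → s ≤ r →
      s ^ (k-1) * ‖iteratedDerivWithin j F (Set.Ioi 0) s‖ ≤ A * (K + 2) * (1 + r ^ e) := by
    intro j hj s hs hsr
    have hj' : (j:ℝ) ≤ (k:ℝ) := by exact_mod_cast hj
    have hjm : (0:ℝ) ≤ (j:ℝ) := Nat.cast_nonneg j
    have hm0 : (0:ℝ) ≤ (m:ℝ) := Nat.cast_nonneg m
    have hn0 : (0:ℝ) ≤ (n:ℝ) := Nat.cast_nonneg n
    have hAK : A * K ≤ A * (K+2) * (1 + r ^ e) := by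
      nlinarith [mul_nonneg (mul_nonneg hA.le (show (0:ℝ) ≤ K+2 by linarith)) hre.le]
    have h2A : A * 2 ≤ A * (K+2) * (1 + r ^ e) := by
      nlinarith [mul_nonneg (mul_nonneg hA.le (show (0:ℝ) ≤ K+2 by linarith)) hre.le]
    rcases le_or_gt 1 s with h1s | h1s
    · -- s ≥ 1 : use hF2
      have hb := hF2 s h1s j hj
      set p : ℝ := ((n:ℝ)+1)/2 - 2*m - j with hpdef
      have hb1 : s ≤ Real.sqrt (1 + s^2) := by
        have h := Real.sqrt_le_sqrt (show s^2 ≤ 1+s^2 by linarith)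
        rwa [Real.sqrt_sq hs.le] at h
      have hb2 : Real.sqrt (1 + s^2) ≤ Real.sqrt 2 * s := by
        have h2 := Real.sqrt_le_sqrt (show (1:ℝ)+s^2 ≤ 2*s^2 by nlinarith)
        rwa [show (2:ℝ)*s^2 = (Real.sqrt 2 * s)^2 by
          rw [mul_pow, Real.sq_sqrt (by norm_num : (0:ℝ) ≤ 2)],
          Real.sqrt_sq (by positivity)] at h2
      have hpQ : p ≤ Q := by rw [hpdef, hQdef]; linarith
      have hKp : Real.sqrt (1 + s^2) ^ p ≤ K * s ^ p := by
        rcases le_or_gt 0 p with hp0 | hp0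
        · calc Real.sqrt (1+s^2) ^ p ≤ (Real.sqrt 2 * s) ^ p :=
                Real.rpow_le_rpow (Real.sqrt_nonneg _) hb2 hp0
            _ = Real.sqrt 2 ^ p * s ^ p := Real.mul_rpow (Real.sqrt_nonneg 2) hs.le
            _ ≤ K * s ^ p := by
                have h3 : Real.sqrt 2 ^ p ≤ K :=
                  Real.rpow_le_rpow_of_exponent_le hsqrt2 hpQ
                exact mul_le_mul_of_nonneg_right h3 (Real.rpow_nonneg hs.le p)
        · calc Real.sqrt (1+s^2) ^ p ≤ s ^ p :=
                Real.rpow_le_rpow_of_nonpos hs hb1 hp0.le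
            _ ≤ K * s ^ p := le_mul_of_one_le_left (Real.rpow_nonneg hs.le p) hK1
      have hse : s ^ e ≤ 1 + r ^ e := by
        rcases le_or_gt 0 e with h | h
        · have : s ^ e ≤ r ^ e := Real.rpow_le_rpow hs.le hsr h
          linarith
        · have : s ^ e ≤ 1 := Real.rpow_le_one_of_one_le_of_nonpos h1s h.le
          linarith
      calc s ^ (k-1) * ‖iteratedDerivWithin j F (Set.Ioi 0) s‖
          ≤ s ^ (k-1) * (A * (K * s ^ p)) := by
            refine mul_le_mul_of_nonneg_left (hb.trans ?_) (pow_nonneg hs.le _)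
            exact mul_le_mul_of_nonneg_left hKp hA.le
        _ = A * K * (s ^ ((k:ℝ)-1) * s ^ p) := by
            rw [← Real.rpow_natCast s (k-1), hcastk]; ring
        _ = A * K * s ^ ((k:ℝ) - 1 + p) := by rw [← Real.rpow_add hs]
        _ ≤ A * K * s ^ e := by
            refine mul_le_mul_of_nonneg_left
              (Real.rpow_le_rpow_of_exponent_le h1s ?_) (by positivity)
            rw [hpdef, he]; linarith
        _ ≤ A * K * (1 + r ^ e) := mul_le_mul_of_nonneg_left hse (by positivity)
        _ ≤ A * (K+2) * (1 + r ^ e) := by nlinarith [hre, hA.le]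
    · -- s < 1
      have hsk1 : s ^ (k-1) ≤ 1 := pow_le_one₀ hs.le h1s.le
      by_cases hj2m : j ≤ 2*m - 1
      · have hb := hF1 s hs j (le_min hj hj2m)
        set p : ℝ := ((n:ℝ)+1)/2 - 2*m - j with hpdef
        have hbl : (1:ℝ) ≤ Real.sqrt (1+s^2) := by
          have := Real.sqrt_le_sqrt (show (1:ℝ) ≤ 1+s^2 by nlinarith)
          simpa using this
        have hbu : Real.sqrt (1+s^2) ≤ Real.sqrt 2 :=
          Real.sqrt_le_sqrt (by nlinarith)
        have habs : |p| ≤ Q := by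
          rw [abs_le]; constructor <;> (rw [hpdef, hQdef]; try linarith)
        have hppa : Real.sqrt (1+s^2) ^ p ≤ K := by
          calc Real.sqrt (1+s^2) ^ p ≤ Real.sqrt (1+s^2) ^ |p| :=
                Real.rpow_le_rpow_of_exponent_le hbl (le_abs_self p)
            _ ≤ Real.sqrt 2 ^ |p| := Real.rpow_le_rpow (by positivity) hbu (abs_nonneg p)
            _ ≤ K := Real.rpow_le_rpow_of_exponent_le hsqrt2 habs
        calc s ^ (k-1) * ‖iteratedDerivWithin j F (Set.Ioi 0) s‖
            ≤ 1 * (A * K) := by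
              refine mul_le_mul hsk1 (hb.trans ?_) (norm_nonneg _) zero_le_one
              exact mul_le_mul_of_nonneg_left hppa hA.le
          _ = A * K := one_mul _
          _ ≤ A * (K+2) * (1 + r ^ e) := hAK
      · by_cases hje : j = 2*m
        · subst hje
          have hb := hF3 hj s hs h1s
          have hk2 : 1 ≤ k - 1 := by omega
          have hpows : s ^ (k-1) ≤ s := by
            have := pow_le_pow_of_le_one hs.le h1s.le hk2
            simpa using this
          have hlog : s * |Real.log s| ≤ 1 := by
            have h1 : |Real.log s| = - Real.log s :=
              abs_of_nonpos (Real.log_nonpos hs.le h1s.le)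
            have h2 := Real.log_le_sub_one_of_pos (inv_pos.mpr hs)
            rw [Real.log_inv] at h2
            rw [h1]
            calc s * -Real.log s ≤ s * s⁻¹ := by
                  refine mul_le_mul_of_nonneg_left ?_ hs.le
                  linarith [inv_pos.mpr hs]
              _ = 1 := mul_inv_cancel₀ hs.ne'
          calc s ^ (k-1) * ‖iteratedDerivWithin (2*m) F (Set.Ioi 0) s‖
              ≤ s * (A * (1 + |Real.log s|)) :=
                mul_le_mul hpows hb (norm_nonneg _) hs.le
            _ = A * (s + s * |Real.log s|) := by ring
            _ ≤ A * 2 := by nlinarith [abs_nonneg (Real.log s)]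
            _ ≤ A * (K+2) * (1 + r ^ e) := h2A
        · have hj2m' : 2*m < j := by omega
          have hb := hF4 j hj2m' hj s hs h1s
          have hexp0 : (0:ℝ) ≤ (k:ℝ) - 1 + (2*(m:ℝ) - j) := by
            have hm1 : (1:ℝ) ≤ (m:ℝ) := by exact_mod_cast hm.trans' one_le_two
            linarith
          calc s ^ (k-1) * ‖iteratedDerivWithin j F (Set.Ioi 0) s‖
              ≤ s ^ (k-1) * (A * s ^ (2*(m:ℝ) - j)) :=
                mul_le_mul_of_nonneg_left hb (pow_nonneg hs.le _)
            _ = A * (s ^ ((k:ℝ)-1) * s ^ (2*(m:ℝ) - j)) := by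
                rw [← Real.rpow_natCast s (k-1), hcastk]; ring
            _ = A * s ^ ((k:ℝ)-1 + (2*(m:ℝ) - j)) := by rw [← Real.rpow_add hs]
            _ ≤ A * 1 := by
                refine mul_le_mul_of_nonneg_left ?_ hA.le
                exact Real.rpow_le_one hs.le h1s.le hexp0
            _ ≤ A * (K+2) * (1 + r ^ e) := by linarith [h2A, hA.le]
  -- assembly
  have hlam : lam ∈ Set.Ioi (0:ℝ) := hlam0
  have hs0 : 0 < lam * r := mul_pos hlam0 hr
  have hsr : lam * r ≤ r := by nlinarith
  have hrc : (0:ℝ) < r ^ (2*(m:ℝ) - n) := Real.rpow_pos_of_pos hr _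
  set c : ℂ := ((r ^ (2*(m:ℝ) - (n:ℝ)) : ℝ) : ℂ) with hcdef
  have hf₁ : ContDiffOn ℝ k (fun μ : ℝ => Complex.exp (Complex.I * μ * r) * c)
      (Set.Ioi 0) := by
    apply ContDiff.contDiffOn
    exact (Complex.contDiff_exp.comp
      ((contDiff_const.mul Complex.ofRealCLM.contDiff).mul contDiff_const)).mul contDiff_const
  have hf₂ : ContDiffOn ℝ k (fun μ : ℝ => F (μ * r)) (Set.Ioi 0) := by
    have hinner : ContDiffOn ℝ k (fun μ : ℝ => μ * r) (Set.Ioi 0) :=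
      (contDiff_id.mul contDiff_const).contDiffOn
    exact ContDiffOn.comp hF hinner (fun μ hμ => mul_pos hμ hr)
  have hmul := norm_iteratedFDerivWithin_mul_le (𝕜 := ℝ)
    (f := fun μ : ℝ => Complex.exp (Complex.I * μ * r) * c)
    (g := fun μ : ℝ => F (μ * r)) hf₁ hf₂ (uniqueDiffOn_Ioi 0) hlam
    (le_refl ((k : ℕ) : WithTop ℕ∞))
  simp only [norm_iteratedFDerivWithin_eq_norm_iteratedDerivWithin] at hmul
  have hn1 : ∀ i : ℕ,
      ‖iteratedDerivWithin i (fun μ : ℝ => Complex.exp (Complex.I * μ * r) * c)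
        (Set.Ioi 0) lam‖ = r ^ i * r ^ (2*(m:ℝ) - n) := by
    intro i
    rw [itDW_open isOpen_Ioi hlam i, exp_factor_iter]
    have hexp1 : ‖Complex.exp (Complex.I * lam * r)‖ = 1 := by
      have h : Complex.I * lam * r = ((lam * r : ℝ) : ℂ) * Complex.I := by
        push_cast; ring
      rw [h, Complex.norm_exp_ofReal_mul_I]
    simp only [norm_mul, norm_pow, hexp1, Complex.norm_I, Complex.norm_real,
      Real.norm_eq_abs, hcdef, abs_of_pos hr, abs_of_pos hrc, one_mul, mul_one]
  have hn2 : ∀ i : ℕ, i ≤ k →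
      ‖iteratedDerivWithin i (fun μ : ℝ => F (μ * r)) (Set.Ioi 0) lam‖ =
        r ^ i * ‖iteratedDerivWithin i F (Set.Ioi 0) (lam * r)‖ := by
    intro i hi
    rw [scale_iter hr hF i hi lam hlam, norm_smul, Real.norm_eq_abs,
      abs_of_pos (pow_pos hr i)]
  have hmul2 : ‖iteratedDerivWithin k
      (fun μ : ℝ => Complex.exp (Complex.I * μ * r) *
        (r ^ (2 * (m : ℝ) - n) : ℝ) * F (μ * r)) (Set.Ioi 0) lam‖ ≤
      ∑ i ∈ Finset.range (k+1), (k.choose i : ℝ) * (r ^ i * r ^ (2*(m:ℝ) - n)) *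
        (r ^ (k-i) * ‖iteratedDerivWithin (k-i) F (Set.Ioi 0) (lam * r)‖) := by
    have hsum_eq : (∑ x ∈ Finset.range (k+1), (k.choose x : ℝ) *
        ‖iteratedDerivWithin x (fun μ : ℝ => Complex.exp (Complex.I * μ * r) * c)
          (Set.Ioi 0) lam‖ *
        ‖iteratedDerivWithin (k-x) (fun μ : ℝ => F (μ * r)) (Set.Ioi 0) lam‖)
        = ∑ i ∈ Finset.range (k+1), (k.choose i : ℝ) * (r ^ i * r ^ (2*(m:ℝ) - n)) *
            (r ^ (k-i) * ‖iteratedDerivWithin (k-i) F (Set.Ioi 0) (lam * r)‖) := by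
      refine Finset.sum_congr rfl fun i hi => ?_
      rw [hn1 i, hn2 (k-i) (Nat.sub_le k i)]
    exact hmul.trans (le_of_eq hsum_eq)
  calc lam ^ (k-1) * ‖iteratedDerivWithin k
        (fun μ : ℝ => Complex.exp (Complex.I * μ * r) *
          (r ^ (2 * (m : ℝ) - n) : ℝ) * F (μ * r)) (Set.Ioi 0) lam‖
      ≤ lam ^ (k-1) * ∑ i ∈ Finset.range (k+1),
          (k.choose i : ℝ) * (r ^ i * r ^ (2*(m:ℝ) - n)) *
          (r ^ (k-i) * ‖iteratedDerivWithin (k-i) F (Set.Ioi 0) (lam * r)‖) :=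
        mul_le_mul_of_nonneg_left hmul2 (pow_nonneg hlam0.le _)
    _ = ∑ i ∈ Finset.range (k+1), (k.choose i : ℝ) *
          (r ^ (2*(m:ℝ) - n) * r *
            ((lam*r) ^ (k-1) * ‖iteratedDerivWithin (k-i) F (Set.Ioi 0) (lam * r)‖)) := by
        rw [Finset.mul_sum]
        refine Finset.sum_congr rfl fun i hi => ?_
        have hik : i ≤ k := Nat.lt_succ_iff.mp (Finset.mem_range.mp hi)
        have h1 : r ^ i * r ^ (k-i) = r ^ k := by
          rw [← pow_add, Nat.add_sub_cancel' hik]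
        have h2 : r ^ k = r ^ (k-1) * r := by
          conv_lhs => rw [show k = (k-1)+1 by omega]
          rw [pow_succ]
        calc lam ^ (k-1) * ((k.choose i : ℝ) * (r ^ i * r ^ (2*(m:ℝ) - n)) *
              (r ^ (k-i) * ‖iteratedDerivWithin (k-i) F (Set.Ioi 0) (lam * r)‖))
            = (k.choose i : ℝ) * (r ^ (2*(m:ℝ) - n) *
                ‖iteratedDerivWithin (k-i) F (Set.Ioi 0) (lam * r)‖ *
                (lam ^ (k-1) * (r ^ i * r ^ (k-i)))) := by ring
          _ = (k.choose i : ℝ) * (r ^ (2*(m:ℝ) - n) *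
                ‖iteratedDerivWithin (k-i) F (Set.Ioi 0) (lam * r)‖ *
                (lam ^ (k-1) * (r ^ (k-1) * r))) := by rw [h1, h2]
          _ = (k.choose i : ℝ) * (r ^ (2*(m:ℝ) - n) * r *
                ((lam*r) ^ (k-1) * ‖iteratedDerivWithin (k-i) F (Set.Ioi 0) (lam * r)‖)) := by
              rw [mul_pow]; ring
    _ ≤ ∑ i ∈ Finset.range (k+1), (k.choose i : ℝ) *
          (r ^ (2*(m:ℝ) - n) * r * (A * (K+2) * (1 + r ^ e))) := by
        refine Finset.sum_le_sum fun i hi => ?_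
        refine mul_le_mul_of_nonneg_left ?_ (Nat.cast_nonneg _)
        refine mul_le_mul_of_nonneg_left ?_ (by positivity)
        exact key (k-i) (Nat.sub_le k i) (lam*r) hs0 hsr
    _ = A * (K+2) * 2 ^ k *
          (r ^ (2*(m:ℝ) + 1 - n) + r ^ ((k:ℝ) - ((n:ℝ)-1)/2)) := by
        rw [← Finset.sum_mul]
        have hsum : (∑ i ∈ Finset.range (k+1), (k.choose i : ℝ)) = 2 ^ k := by
          rw [← Nat.cast_sum]
          exact_mod_cast congrArg (Nat.cast (R := ℝ)) (Nat.sum_range_choose k)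
        rw [hsum]
        have hr1 : r ^ (2*(m:ℝ) - n) * r = r ^ (2*(m:ℝ) + 1 - n) := by
          rw [show (2*(m:ℝ) + 1 - n) = (2*(m:ℝ) - n) + 1 by ring,
            Real.rpow_add hr, Real.rpow_one]
        have hr2 : r ^ (2*(m:ℝ) + 1 - n) * r ^ e = r ^ ((k:ℝ) - ((n:ℝ)-1)/2) := by
          rw [← Real.rpow_add hr]
          congr 1
          rw [he]; ring
        rw [hr1, ← hr2]
        ring
end
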